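/- arXiv:1904.03572 — 7 statements merged into one kernel-verified Lean document; each statement's English description precedes it below -/
import Mathlib

section
/- Let U ⊆ C^{l1}×...×C^{ln} be open and K ⊆ U compact. If the C^n-holomorphically convex hull K̂ of K in U is not compact, then there exists a point b in the complement of U whose distance to K̂ is zero, i.e., inf_{a∈K̂} |a − b| = 0. -/
open Set Metric

/-- `f : ℂ^{l 0} × ... × ℂ^{l (n-1)} → ℂ^n` is `ℂⁿ`-holomorphic on `U`:
holomorphic, and for `i ≠ j` the partial derivative of the `i`-th component
in every direction of the `j`-th coordinate block vanishes. -/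
def CnHolo {n : ℕ} {l : Fin n → ℕ} (U : Set (∀ j, Fin (l j) → ℂ))
    (f : (∀ j, Fin (l j) → ℂ) → (Fin n → ℂ)) : Prop :=
  DifferentiableOn ℂ f U ∧
    ∀ a ∈ U, ∀ i j : Fin n, i ≠ j → ∀ v : Fin (l j) → ℂ,
      fderiv ℂ (fun z => f z i) a (Pi.single j v) = 0

/-- The `ℂⁿ`-holomorphically convex hull of `K` in `U` (sup-norms throughout). -/
def cnHull {n : ℕ} {l : Fin n → ℕ} (U K : Set (∀ j, Fin (l j) → ℂ)) :
    Set (∀ j, Fin (l j) → ℂ) :=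
  {z ∈ U | ∀ f, CnHolo U f → ‖f z‖ ≤ sSup ((fun w => ‖f w‖) '' K)}

/-- If the `ℂⁿ`-holomorphically convex hull of a compact `K ⊆ U` is not
compact, then some point outside `U` is at distance zero from the hull. -/
theorem cnHull_not_compact_exists_boundary {n : ℕ} {l : Fin n → ℕ}
    (U K : Set (∀ j, Fin (l j) → ℂ)) (hU : IsOpen U)
    (hKU : K ⊆ U) (hK : IsCompact K) (h : ¬ IsCompact (cnHull U K)) :
    ∃ b, b ∉ U ∧ Metric.infDist b (cnHull U K) = 0 := by
  classical
  obtain ⟨C, hC⟩ := hK.isBounded.exists_norm_le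
  have key : ∀ z ∈ cnHull U K, ∀ j (k : Fin (l j)), ‖z j k‖ ≤ max C 0 := by
    intro z hz j k
    set L : (∀ j, Fin (l j) → ℂ) →L[ℂ] ℂ :=
      (ContinuousLinearMap.proj k).comp
        (ContinuousLinearMap.proj (R := ℂ) (φ := fun j => Fin (l j) → ℂ) j) with hL
    set f : (∀ j, Fin (l j) → ℂ) → (Fin n → ℂ) :=
      fun z i => if i = j then z j k else 0 with hfdef
    have hholo : CnHolo U f := by
      constructor
      · apply Differentiable.differentiableOn
        apply differentiable_pi.2
        intro i
        by_cases hij : i = j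
        · subst hij
          have : (fun z : ∀ j, Fin (l j) → ℂ => f z i) = fun z => L z := by
            funext z; simp [hfdef, hL]
          rw [this]; exact L.differentiable
        · have : (fun z : ∀ j, Fin (l j) → ℂ => f z i) = fun _ => 0 := by
            funext z; simp [hfdef, hij]
          rw [this]; exact differentiable_const 0
      · intro a _ i j' hij' v
        by_cases hij : i = j
        · subst hij
          have : (fun z : ∀ j, Fin (l j) → ℂ => f z i) = fun z => L z := by
            funext z; simp [hfdef, hL]
          rw [this, L.fderiv]
          simp [hL, Pi.single_eq_of_ne hij']
        · have : (fun z : ∀ j, Fin (l j) → ℂ => f z i) = fun _ => 0 := by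
            funext z; simp [hfdef, hij]
          rw [this, fderiv_fun_const]
          rfl
    have h1 := hz.2 f hholo
    have h2 : ‖z j k‖ ≤ ‖f z‖ := by
      have := norm_le_pi_norm (f z) j
      simpa [hfdef] using this
    have h3 : sSup ((fun w => ‖f w‖) '' K) ≤ max C 0 := by
      rcases K.eq_empty_or_nonempty with hKe | hKne
      · simp [hKe, Real.sSup_empty]
      · apply csSup_le (hKne.image _)
        rintro _ ⟨w, hw, rfl⟩
        have hfw : ‖f w‖ ≤ ‖w j k‖ := by
          refine (pi_norm_le_iff_of_nonneg (norm_nonneg _)).2 fun i => ?_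
          by_cases hij : i = j <;> simp [hfdef, hij]
        calc ‖f w‖ ≤ ‖w j k‖ := hfw
          _ ≤ ‖w j‖ := norm_le_pi_norm (w j) k
          _ ≤ ‖w‖ := norm_le_pi_norm w j
          _ ≤ C := hC w hw
          _ ≤ max C 0 := le_max_left _ _
    exact h2.trans (h1.trans h3)
  have hbdd : Bornology.IsBounded (cnHull U K) := by
    refine isBounded_iff_forall_norm_le.2 ⟨max C 0, fun z hz => ?_⟩
    refine (pi_norm_le_iff_of_nonneg (le_max_right C 0)).2 fun j => ?_
    exact (pi_norm_le_iff_of_nonneg (le_max_right C 0)).2 fun k => key z hz j k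
  have hclos : IsCompact (closure (cnHull U K)) := hbdd.isCompact_closure
  obtain ⟨b, hbcl, hbmem⟩ : ∃ b, b ∈ closure (cnHull U K) ∧ b ∉ cnHull U K := by
    by_contra hcon
    push_neg at hcon
    have hcle : closure (cnHull U K) = cnHull U K :=
      Subset.antisymm hcon subset_closure
    exact h (hcle ▸ hclos)
  refine ⟨b, fun hbU => hbmem ⟨hbU, fun f hf => ?_⟩, infDist_zero_of_mem_closure hbcl⟩
  have hAt : ContinuousAt (fun z => ‖f z‖) b :=
    ((hf.1.differentiableAt (hU.mem_nhds hbU)).continuousAt).norm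
  have hnb : (nhdsWithin b (cnHull U K)).NeBot :=
    mem_closure_iff_nhdsWithin_neBot.1 hbcl
  exact le_of_tendsto (hAt.continuousWithinAt (s := cnHull U K))
    (eventually_nhdsWithin_of_forall fun z hz => hz.2 f hf)
end

section
/- If an open set U ⊆ C^{l1}×...×C^{ln} is a domain of C^n-holomorphy, then U is C^n-holomorphically convex (i.e., for every compact K ⊆ U, the hull K̂ = { z ∈ U : |f(z)| ≤ sup_K |f| for all f ∈ O_{l1,...,ln}(U) } is compact). -/
open Set Metric

/-- `U` is a domain of `ℂⁿ`-existence. -/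
def IsDomainOfCnExistence {n : ℕ} {l : Fin n → ℕ}
    (U : Set (∀ j, Fin (l j) → ℂ)) : Prop :=
  ∃ f, CnHolo U f ∧ ∀ V W : Set (∀ j, Fin (l j) → ℂ), IsOpen V → IsOpen W →
    IsConnected V → (V \ U).Nonempty → W.Nonempty → W ⊆ U ∩ V →
    ∀ g, CnHolo V g → ¬ Set.EqOn f g W

/-- `U` is a domain of `ℂⁿ`-holomorphy. -/
def IsDomainOfCnHolomorphy {n : ℕ} {l : Fin n → ℕ}
    (U : Set (∀ j, Fin (l j) → ℂ)) : Prop :=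
  ∀ V W : Set (∀ j, Fin (l j) → ℂ), IsOpen V → IsOpen W →
    IsConnected V → (V \ U).Nonempty → W.Nonempty → W ⊆ U ∩ V →
    ∃ f, CnHolo U f ∧ ∀ g, CnHolo V g → ¬ Set.EqOn f g W

/-- `U` is `ℂⁿ`-holomorphically convex. -/
def IsCnHoloConvex {n : ℕ} {l : Fin n → ℕ}
    (U : Set (∀ j, Fin (l j) → ℂ)) : Prop :=
  ∀ K ⊆ U, IsCompact K → IsCompact (cnHull U K)


set_option maxHeartbeats 1000000

open MeasureTheory Filter

noncomputable section

namespace CnAux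

variable {n : ℕ} {l : Fin n → ℕ}

/-- The product space. -/
abbrev P (n : ℕ) (l : Fin n → ℕ) := ∀ j, Fin (l j) → ℂ

/-- The target space. -/
abbrev Fn (n : ℕ) := Fin n → ℂ

/-- A bound on the derivative of a holomorphic function from a bound on the function,
via a one-dimensional slice and Cauchy's estimate. -/
theorem fderiv_bound {f : P n l → Fn n} {x : P n l} {s M : ℝ}
    (hs : 0 < s) (hd : DifferentiableOn ℂ f (ball x s))
    (hM : ∀ y ∈ ball x s, ‖f y‖ ≤ M) (v : P n l) :
    ‖fderiv ℂ f x v‖ ≤ 2 / s * M * ‖v‖ := by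
  have hM0 : 0 ≤ M := (norm_nonneg _).trans (hM x (mem_ball_self hs))
  rcases eq_or_ne v 0 with rfl | hv
  · simp only [map_zero, norm_zero]
    positivity
  have hvn : 0 < ‖v‖ := norm_pos_iff.mpr hv
  set ρ : ℝ := s / (2 * ‖v‖) with hρdef
  have hρ : 0 < ρ := by positivity
  have hmap : ∀ ζ : ℂ, ‖ζ‖ ≤ ρ → x + ζ • v ∈ ball x s := by
    intro ζ hζ
    have h1 : ‖ζ • v‖ ≤ ρ * ‖v‖ := by
      rw [norm_smul]; exact mul_le_mul_of_nonneg_right hζ hvn.le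
    have h2 : ρ * ‖v‖ = s / 2 := by
      rw [hρdef]; field_simp
    simp only [mem_ball, dist_eq_norm, add_sub_cancel_left]
    calc ‖ζ • v‖ ≤ s / 2 := h2 ▸ h1
      _ < s := by linarith
  set φ : ℂ → Fn n := fun ζ => f (x + ζ • v) with hφ
  have hφd : DifferentiableOn ℂ φ (closedBall 0 ρ) := by
    intro ζ hζ
    have hζρ : ‖ζ‖ ≤ ρ := by simpa [dist_zero_right] using mem_closedBall.mp hζ
    have hxm : x + ζ • v ∈ ball x s := hmap ζ hζρ
    have h1 : DifferentiableAt ℂ (fun w : ℂ => x + w • v) ζ :=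
      (differentiableAt_id.smul_const v).const_add x
    exact ((hd.differentiableAt (isOpen_ball.mem_nhds hxm)).comp ζ h1).differentiableWithinAt
  have hρcoe : ((ρ.toNNReal : NNReal) : ℝ) = ρ := Real.coe_toNNReal _ hρ.le
  have hps : HasFPowerSeriesOnBall φ (cauchyPowerSeries φ 0 ρ) 0 ρ.toNNReal := by
    have := (show DifferentiableOn ℂ φ (closedBall 0 ((ρ.toNNReal : NNReal) : ℝ)) by
      rw [hρcoe]; exact hφd).hasFPowerSeriesOnBall (by simpa using Real.toNNReal_pos.mpr hρ)
    rwa [hρcoe] at this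
  have hder : HasDerivAt φ (fderiv ℂ f x v) 0 := by
    have h1 : HasDerivAt (fun w : ℂ => x + w • v) v 0 := by
      simpa using ((hasDerivAt_id (0 : ℂ)).smul_const v).const_add x
    have hx0 : x + (0 : ℂ) • v = x := by simp
    have h2 : DifferentiableAt ℂ f (x + (0 : ℂ) • v) := by
      rw [hx0]; exact hd.differentiableAt (isOpen_ball.mem_nhds (mem_ball_self hs))
    have h3 := h2.hasFDerivAt.comp_hasDerivAt 0 h1
    rw [hx0] at h3; exact h3
  have hval : fderiv ℂ f x v = cauchyPowerSeries φ 0 ρ 1 (fun _ => 1) := by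
    rw [← hps.hasFPowerSeriesAt.deriv]
    exact hder.deriv.symm
  -- continuity of the slice on the circle
  have hccont : Continuous fun θ : ℝ => φ (circleMap 0 ρ θ) := by
    apply (hφd.continuousOn).comp_continuous (continuous_circleMap 0 ρ)
    exact fun θ => circleMap_mem_closedBall 0 hρ.le θ
  have hint : (∫ θ in (0 : ℝ)..2 * Real.pi, ‖φ (circleMap 0 ρ θ)‖) ≤ 2 * Real.pi * M := by
    have hb : ∀ θ ∈ Icc (0 : ℝ) (2 * Real.pi), ‖φ (circleMap 0 ρ θ)‖ ≤ M := by
      intro θ _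
      apply hM
      apply hmap
      simp [abs_of_nonneg hρ.le]
    calc (∫ θ in (0 : ℝ)..2 * Real.pi, ‖φ (circleMap 0 ρ θ)‖)
        ≤ ∫ _ in (0 : ℝ)..2 * Real.pi, M := by
          apply intervalIntegral.integral_mono_on Real.two_pi_pos.le
            (hccont.norm.intervalIntegrable _ _) intervalIntegrable_const hb
      _ = 2 * Real.pi * M := by simp [mul_comm]
  have hop : ‖cauchyPowerSeries φ 0 ρ 1‖ ≤
      ((2 * Real.pi)⁻¹ * ∫ θ in (0 : ℝ)..2 * Real.pi, ‖φ (circleMap 0 ρ θ)‖) * |ρ|⁻¹ ^ 1 :=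
    norm_cauchyPowerSeries_le φ 0 ρ 1
  have happ : ‖cauchyPowerSeries φ 0 ρ 1 (fun _ => 1)‖ ≤ ‖cauchyPowerSeries φ 0 ρ 1‖ := by
    have := (cauchyPowerSeries φ 0 ρ 1).le_opNorm (fun _ => 1)
    simpa using this
  rw [hval]
  have hπ : (0:ℝ) < 2 * Real.pi := Real.two_pi_pos
  calc ‖cauchyPowerSeries φ 0 ρ 1 (fun _ => 1)‖ ≤ ‖cauchyPowerSeries φ 0 ρ 1‖ := happ
    _ ≤ ((2 * Real.pi)⁻¹ * ∫ θ in (0 : ℝ)..2 * Real.pi, ‖φ (circleMap 0 ρ θ)‖) * |ρ|⁻¹ ^ 1 := hop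
    _ ≤ ((2 * Real.pi)⁻¹ * (2 * Real.pi * M)) * |ρ|⁻¹ ^ 1 := by
        apply mul_le_mul_of_nonneg_right _ (by positivity)
        exact mul_le_mul_of_nonneg_left hint (by positivity)
    _ = M / ρ := by
        rw [abs_of_pos hρ]
        field_simp
    _ = 2 / s * M * ‖v‖ := by
        rw [hρdef]
        field_simp

/-- Admissibility of a slice radius. -/
def adm (U : Set (P n l)) (x v : P n l) (s : ℝ) : Prop :=
  0 < s ∧ ∀ ζ : ℂ, ‖ζ‖ ≤ s → x + ζ • v ∈ U

open Classical in
/-- The `m`-th Taylor coefficient of `f` along the complex line through `x` in direction `v`. -/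
noncomputable def coeffFn (f : P n l → Fn n) (U : Set (P n l)) (m : ℕ) (v x : P n l) : Fn n :=
  if h : ∃ s, adm U x v s then
    cauchyPowerSeries (fun ζ : ℂ => f (x + ζ • v)) 0 h.choose m (fun _ => 1)
  else 0

theorem slice_diffOn {U : Set (P n l)} (hU : IsOpen U) {f : P n l → Fn n}
    (hf : DifferentiableOn ℂ f U) {x v : P n l} {s : ℝ}
    (h : ∀ ζ : ℂ, ‖ζ‖ ≤ s → x + ζ • v ∈ U) :
    DifferentiableOn ℂ (fun ζ : ℂ => f (x + ζ • v)) (closedBall 0 s) := by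
  intro ζ hζ
  have hζs : ‖ζ‖ ≤ s := by simpa [dist_zero_right] using mem_closedBall.mp hζ
  have h1 : DifferentiableAt ℂ (fun w : ℂ => x + w • v) ζ :=
    (differentiableAt_id.smul_const v).const_add x
  exact ((hf.differentiableAt (hU.mem_nhds (h ζ hζs))).comp ζ h1).differentiableWithinAt

theorem slice_hasFPowerSeries {U : Set (P n l)} (hU : IsOpen U) {f : P n l → Fn n}
    (hf : DifferentiableOn ℂ f U) {x v : P n l} {s : ℝ} (hadm : adm U x v s) :
    HasFPowerSeriesOnBall (fun ζ : ℂ => f (x + ζ • v))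
      (cauchyPowerSeries (fun ζ : ℂ => f (x + ζ • v)) 0 s) 0 s.toNNReal := by
  have hscoe : ((s.toNNReal : NNReal) : ℝ) = s := Real.coe_toNNReal _ hadm.1.le
  have := (show DifferentiableOn ℂ (fun ζ : ℂ => f (x + ζ • v))
      (closedBall 0 ((s.toNNReal : NNReal) : ℝ)) by
    rw [hscoe]; exact slice_diffOn hU hf hadm.2).hasFPowerSeriesOnBall
    (by simpa using Real.toNNReal_pos.mpr hadm.1)
  rwa [hscoe] at this

theorem coeffFn_eq {U : Set (P n l)} (hU : IsOpen U) {f : P n l → Fn n}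
    (hf : DifferentiableOn ℂ f U) {x v : P n l} {s : ℝ} (hadm : adm U x v s) (m : ℕ) :
    coeffFn f U m v x = cauchyPowerSeries (fun ζ : ℂ => f (x + ζ • v)) 0 s m (fun _ => 1) := by
  have hex : ∃ t, adm U x v t := ⟨s, hadm⟩
  simp only [coeffFn]
  rw [dif_pos hex]
  have h1 := (slice_hasFPowerSeries hU hf hex.choose_spec).hasFPowerSeriesAt
  have h2 := (slice_hasFPowerSeries hU hf hadm).hasFPowerSeriesAt
  rw [h1.eq_formalMultilinearSeries h2]

theorem coeffFn_norm_le {U : Set (P n l)} (hU : IsOpen U) {f : P n l → Fn n}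
    (hf : DifferentiableOn ℂ f U) {x v : P n l} {s M : ℝ} (hadm : adm U x v s)
    (hM : ∀ ζ : ℂ, ‖ζ‖ ≤ s → ‖f (x + ζ • v)‖ ≤ M) (m : ℕ) :
    ‖coeffFn f U m v x‖ ≤ M / s ^ m := by
  have hs := hadm.1
  have hM0 : 0 ≤ M := (norm_nonneg _).trans (hM 0 (by simp [hs.le]))
  rw [coeffFn_eq hU hf hadm m]
  set φ : ℂ → Fn n := fun ζ => f (x + ζ • v) with hφ
  have hccont : Continuous fun θ : ℝ => φ (circleMap 0 s θ) := by
    apply ((slice_diffOn hU hf hadm.2).continuousOn).comp_continuous (continuous_circleMap 0 s)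
    exact fun θ => circleMap_mem_closedBall 0 hs.le θ
  have hint : (∫ θ in (0 : ℝ)..2 * Real.pi, ‖φ (circleMap 0 s θ)‖) ≤ 2 * Real.pi * M := by
    have hb : ∀ θ ∈ Icc (0 : ℝ) (2 * Real.pi), ‖φ (circleMap 0 s θ)‖ ≤ M := by
      intro θ _
      apply hM
      simp [abs_of_nonneg hs.le]
    calc (∫ θ in (0 : ℝ)..2 * Real.pi, ‖φ (circleMap 0 s θ)‖)
        ≤ ∫ _ in (0 : ℝ)..2 * Real.pi, M := by
          apply intervalIntegral.integral_mono_on Real.two_pi_pos.le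
            (hccont.norm.intervalIntegrable _ _) intervalIntegrable_const hb
      _ = 2 * Real.pi * M := by simp [mul_comm]
  have happ : ‖cauchyPowerSeries φ 0 s m (fun _ => 1)‖ ≤ ‖cauchyPowerSeries φ 0 s m‖ := by
    have := (cauchyPowerSeries φ 0 s m).le_opNorm (fun _ => 1)
    simpa using this
  calc ‖cauchyPowerSeries φ 0 s m (fun _ => 1)‖ ≤ ‖cauchyPowerSeries φ 0 s m‖ := happ
    _ ≤ ((2 * Real.pi)⁻¹ * ∫ θ in (0 : ℝ)..2 * Real.pi, ‖φ (circleMap 0 s θ)‖) * |s|⁻¹ ^ m :=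
        norm_cauchyPowerSeries_le φ 0 s m
    _ ≤ ((2 * Real.pi)⁻¹ * (2 * Real.pi * M)) * |s|⁻¹ ^ m := by
        apply mul_le_mul_of_nonneg_right _ (by positivity)
        exact mul_le_mul_of_nonneg_left hint (by positivity)
    _ = M / s ^ m := by
        rw [abs_of_pos hs, inv_pow]
        field_simp

theorem coeffFn_hasSum {U : Set (P n l)} (hU : IsOpen U) {f : P n l → Fn n}
    (hf : DifferentiableOn ℂ f U) {x v : P n l} {s : ℝ} (hadm : adm U x v s) (hs1 : 1 < s) :
    HasSum (fun m => coeffFn f U m v x) (f (x + v)) := by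
  have hps := slice_hasFPowerSeries hU hf hadm
  have hmem : (1 : ℂ) ∈ Metric.eball (0 : ℂ) (s.toNNReal : ENNReal) := by
    rw [mem_emetric_ball_zero_iff]
    have h1 : ‖(1 : ℂ)‖ₑ = 1 := by simp
    rw [h1]
    exact_mod_cast Real.one_lt_toNNReal.mpr hs1
  have := hps.hasSum hmem
  simp only [zero_add, one_smul] at this
  exact HasSum.congr_fun this fun m => coeffFn_eq hU hf hadm m


/-- Differentiability (plus vanishing of the forbidden partial derivatives) of a
circle-integral coefficient depending affinely on a parameter. -/
theorem param {U : Set (P n l)} (hU : IsOpen U) {f : P n l → Fn n} (hf : CnHolo U f)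
    (m : ℕ) {s ε : ℝ} (hs : 0 < s) (hε : 0 < ε)
    (p₀ q₀ : P n l) (Pm Qm : P n l →L[ℂ] P n l) (x₀ : P n l)
    (htube : ∀ x ∈ closedBall x₀ ε, ∀ ζ : ℂ, ‖ζ‖ ≤ s →
      p₀ + ζ • q₀ + (Pm x + ζ • Qm x) ∈ U) :
    DifferentiableAt ℂ
      (fun x => cauchyPowerSeries (fun ζ : ℂ => f (p₀ + ζ • q₀ + (Pm x + ζ • Qm x))) 0 s m
        (fun _ => 1)) x₀ ∧
    ∀ i j : Fin n, i ≠ j → ∀ u : Fin (l j) → ℂ,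
      (∀ ζ : ℂ, ∃ u', Pm (Pi.single j u) + ζ • Qm (Pi.single j u) = Pi.single j u') →
      fderiv ℂ (fun x => (cauchyPowerSeries
          (fun ζ : ℂ => f (p₀ + ζ • q₀ + (Pm x + ζ • Qm x))) 0 s m (fun _ => 1)) i) x₀
        (Pi.single j u) = 0 := by
  have hγnorm : ∀ θ : ℝ, ‖circleMap 0 s θ‖ = s := by
    intro θ; simp [norm_circleMap_zero, abs_of_pos hs]
  have hγne : ∀ θ : ℝ, circleMap 0 s θ ≠ 0 := by
    intro θ h0
    have := hγnorm θ
    rw [h0] at this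
    simp at this
    exact hs.ne' this.symm
  set κ : ℝ → ℂ := fun θ =>
    (2 * ↑Real.pi * Complex.I)⁻¹ *
      ((circleMap 0 s θ * Complex.I) * ((1 / circleMap 0 s θ) ^ m * (circleMap 0 s θ)⁻¹)) with hκ
  set crv : P n l → ℂ → P n l := fun x ζ => p₀ + ζ • q₀ + (Pm x + ζ • Qm x) with hcrv
  have hrepr : ∀ x, cauchyPowerSeries (fun ζ : ℂ => f (crv x ζ)) 0 s m (fun _ => 1)
      = ∫ θ in (0 : ℝ)..2 * Real.pi, κ θ • f (crv x (circleMap 0 s θ)) := by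
    intro x
    rw [cauchyPowerSeries_apply]
    simp only [circleIntegral, deriv_circleMap, sub_zero, ← intervalIntegral.integral_smul,
      smul_smul, hκ, mul_assoc]
  set T : Set (P n l) := (fun p : P n l × ℂ => crv p.1 p.2) '' (closedBall x₀ ε ×ˢ closedBall 0 s)
    with hT
  have hcrvcont : Continuous fun p : P n l × ℂ => crv p.1 p.2 := by
    apply Continuous.add
    · exact continuous_const.add (continuous_snd.smul continuous_const)
    · exact (Pm.continuous.comp continuous_fst).add
        (continuous_snd.smul (Qm.continuous.comp continuous_fst))
  have hTcomp : IsCompact T :=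
    ((isCompact_closedBall x₀ ε).prod (isCompact_closedBall 0 s)).image hcrvcont
  have hTU : T ⊆ U := by
    rintro _ ⟨⟨x, ζ⟩, ⟨hx, hζ⟩, rfl⟩
    exact htube x hx ζ (by simpa [dist_zero_right] using mem_closedBall.mp hζ)
  obtain ⟨δ, hδ, hδU⟩ := hTcomp.exists_cthickening_subset_open hU hTU
  obtain ⟨Mf, hMf⟩ := (hTcomp.cthickening (r := δ)).exists_bound_of_continuousOn
    (hf.1.continuousOn.mono hδU)
  have hmemT : ∀ x ∈ closedBall x₀ ε, ∀ θ : ℝ, crv x (circleMap 0 s θ) ∈ T := by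
    intro x hx θ
    exact ⟨(x, circleMap 0 s θ), ⟨hx, by simp [mem_closedBall, dist_zero_right, hγnorm θ]⟩, rfl⟩
  have hMf0 : 0 ≤ Mf := (norm_nonneg _).trans
    (hMf _ (self_subset_cthickening T (hmemT x₀ (mem_closedBall_self hε.le) 0)))
  have hdb : ∀ y ∈ T, ‖fderiv ℂ f y‖ ≤ 2 / δ * Mf := by
    intro y hy
    apply ContinuousLinearMap.opNorm_le_bound _ (by positivity)
    intro w
    have hball : ball y δ ⊆ cthickening δ T :=
      (ball_subset_thickening hy δ).trans (thickening_subset_cthickening δ T)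
    exact fderiv_bound hδ (hf.1.mono (hball.trans hδU)) (fun z hz => hMf z (hball hz)) w
  have hκcont : Continuous κ := by
    rw [hκ]
    exact continuous_const.mul (((continuous_circleMap 0 s).mul continuous_const).mul
      (((continuous_const.div (continuous_circleMap 0 s) hγne).pow m).mul
        ((continuous_circleMap 0 s).inv₀ hγne)))
  have hκb : ∀ θ, ‖κ θ‖ ≤ (2 * Real.pi)⁻¹ * (1 / s) ^ m := by
    intro θ
    apply le_of_eq
    rw [hκ]
    simp only [norm_mul, norm_inv, norm_pow, norm_div, Complex.norm_I,
      norm_one, hγnorm θ, mul_one]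
    have h2 : ‖(2 : ℂ)‖ = 2 := by norm_num
    have hpi : ‖(↑Real.pi : ℂ)‖ = Real.pi := by
      simp [Complex.norm_real, abs_of_pos Real.pi_pos]
    rw [h2, hpi]
    field_simp
  set Fc : P n l → ℝ → Fn n := fun x θ => κ θ • f (crv x (circleMap 0 s θ)) with hFc
  set Fd2 : P n l → ℝ → P n l →L[ℂ] Fn n := fun x θ =>
    κ θ • ((fderiv ℂ f (crv x (circleMap 0 s θ))).comp (Pm + circleMap 0 s θ • Qm)) with hFd2
  have hcont_x : ∀ x ∈ closedBall x₀ ε, Continuous fun θ => Fc x θ := by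
    intro x hx
    apply hκcont.smul
    apply hf.1.continuousOn.comp_continuous
    · exact hcrvcont.comp (continuous_const.prodMk (continuous_circleMap 0 s))
    · exact fun θ => hTU (hmemT x hx θ)
  have hF_meas : ∀ᶠ x in nhds x₀, AEStronglyMeasurable (Fc x)
      (volume.restrict (Set.uIoc (0:ℝ) (2 * Real.pi))) := by
    filter_upwards [closedBall_mem_nhds x₀ hε] with x hx
    exact (hcont_x x hx).aestronglyMeasurable
  have hF_int : IntervalIntegrable (Fc x₀) volume 0 (2 * Real.pi) :=
    (hcont_x x₀ (mem_closedBall_self hε.le)).intervalIntegrable _ _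
  have hFd_meas : AEStronglyMeasurable (Fd2 x₀) (volume.restrict (Set.uIoc (0:ℝ) (2 * Real.pi))) := by
    have mcurve : Continuous fun θ => crv x₀ (circleMap 0 s θ) :=
      hcrvcont.comp (continuous_const.prodMk (continuous_circleMap 0 s))
    have m1 : Measurable fun θ => fderiv ℂ f (crv x₀ (circleMap 0 s θ)) :=
      (measurable_fderiv ℂ f).comp mcurve.measurable
    have hΞ : Continuous fun q : ℝ × (P n l →L[ℂ] Fn n) =>
        κ q.1 • (q.2.comp (Pm + circleMap 0 s q.1 • Qm)) := by
      apply (hκcont.comp continuous_fst).smul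
      exact isBoundedBilinearMap_comp.continuous.comp
        (continuous_snd.prodMk (continuous_const.add
          (((continuous_circleMap 0 s).comp continuous_fst).smul continuous_const)))
    exact (hΞ.measurable.comp (measurable_id.prodMk m1)).aestronglyMeasurable
  have hQb : ∀ θ : ℝ, ‖Pm + circleMap 0 s θ • Qm‖ ≤ ‖Pm‖ + s * ‖Qm‖ := by
    intro θ
    refine (norm_add_le _ _).trans ?_
    have h1 : ‖circleMap 0 s θ • Qm‖ ≤ s * ‖Qm‖ := by
      refine (norm_smul_le (circleMap 0 s θ) Qm).trans ?_
      rw [hγnorm θ]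
    exact add_le_add le_rfl h1
  set C : ℝ := (2 * Real.pi)⁻¹ * (1 / s) ^ m * (2 / δ * Mf * (‖Pm‖ + s * ‖Qm‖)) with hC
  have hFdb : ∀ x ∈ closedBall x₀ ε, ∀ θ : ℝ, ‖Fd2 x θ‖ ≤ C := by
    intro x hxc θ
    calc ‖Fd2 x θ‖
        ≤ ‖κ θ‖ * ‖(fderiv ℂ f (crv x (circleMap 0 s θ))).comp (Pm + circleMap 0 s θ • Qm)‖ := by
          rw [hFd2]
          exact norm_smul_le (κ θ)
            ((fderiv ℂ f (crv x (circleMap 0 s θ))).comp (Pm + circleMap 0 s θ • Qm))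
      _ ≤ ((2 * Real.pi)⁻¹ * (1 / s) ^ m) *
          (‖fderiv ℂ f (crv x (circleMap 0 s θ))‖ * ‖Pm + circleMap 0 s θ • Qm‖) := by
          apply mul_le_mul (hκb θ) (ContinuousLinearMap.opNorm_comp_le _ _) (norm_nonneg _)
          positivity
      _ ≤ ((2 * Real.pi)⁻¹ * (1 / s) ^ m) * ((2 / δ * Mf) * (‖Pm‖ + s * ‖Qm‖)) := by
          apply mul_le_mul_of_nonneg_left _ (by positivity)
          apply mul_le_mul (hdb _ (hmemT x hxc θ)) (hQb θ) (norm_nonneg _) (by positivity)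
      _ = C := by rw [hC]
  have h_bound : ∀ᵐ θ ∂(volume : Measure ℝ), θ ∈ Set.uIoc (0:ℝ) (2 * Real.pi) →
      ∀ x ∈ ball x₀ ε, ‖Fd2 x θ‖ ≤ C :=
    Filter.Eventually.of_forall fun θ _ x hx => hFdb x (ball_subset_closedBall hx) θ
  have h_diff : ∀ᵐ θ ∂(volume : Measure ℝ), θ ∈ Set.uIoc (0:ℝ) (2 * Real.pi) →
      ∀ x ∈ ball x₀ ε, HasFDerivAt (fun x => Fc x θ) (Fd2 x θ) x := by
    apply Filter.Eventually.of_forall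
    intro θ _ x hx
    have hxc : x ∈ closedBall x₀ ε := ball_subset_closedBall hx
    have hinner : HasFDerivAt (fun x => crv x (circleMap 0 s θ))
        (Pm + circleMap 0 s θ • Qm) x := by
      have h1 := (Pm + circleMap 0 s θ • Qm).hasFDerivAt (x := x)
      have h2 := h1.const_add (p₀ + circleMap 0 s θ • q₀)
      apply h2.congr_of_eventuallyEq
      apply Filter.Eventually.of_forall
      intro y
      simp [hcrv, ContinuousLinearMap.add_apply, ContinuousLinearMap.smul_apply]
    have houter : HasFDerivAt f (fderiv ℂ f (crv x (circleMap 0 s θ)))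
        (crv x (circleMap 0 s θ)) :=
      (hf.1.differentiableAt (hU.mem_nhds (hTU (hmemT x hxc θ)))).hasFDerivAt
    exact (houter.comp x hinner).const_smul (κ θ)
  have hmain := intervalIntegral.hasFDerivAt_integral_of_dominated_of_fderiv_le
    (F := Fc) (F' := Fd2) (x₀ := x₀) (a := 0) (b := 2 * Real.pi) (bound := fun _ => C)
    (μ := volume) (ball_mem_nhds x₀ hε) hF_meas hF_int hFd_meas h_bound intervalIntegrable_const h_diff
  have hmain' : HasFDerivAt
      (fun x => cauchyPowerSeries (fun ζ : ℂ => f (p₀ + ζ • q₀ + (Pm x + ζ • Qm x)))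
        0 s m (fun _ => 1)) (∫ θ in (0 : ℝ)..2 * Real.pi, Fd2 x₀ θ) x₀ := by
    have hfun : (fun x => cauchyPowerSeries (fun ζ : ℂ => f (p₀ + ζ • q₀ + (Pm x + ζ • Qm x)))
        0 s m (fun _ => 1)) = fun x => ∫ θ in (0 : ℝ)..2 * Real.pi, Fc x θ := by
      funext x
      exact hrepr x
    rw [hfun]
    exact hmain
  refine ⟨hmain'.differentiableAt, ?_⟩
  intro i j hij u hPQ
  have hfd : fderiv ℂ
      (fun x => (cauchyPowerSeries (fun ζ : ℂ => f (p₀ + ζ • q₀ + (Pm x + ζ • Qm x)))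
        0 s m (fun _ => 1)) i) x₀
      = (ContinuousLinearMap.proj (R := ℂ) (φ := fun _ : Fin n => ℂ) i).comp
        (∫ θ in (0 : ℝ)..2 * Real.pi, Fd2 x₀ θ) :=
    (((ContinuousLinearMap.proj (R := ℂ) (φ := fun _ : Fin n => ℂ)
      i).hasFDerivAt).comp x₀ hmain').fderiv
  rw [hfd]
  have hintFd : IntervalIntegrable (Fd2 x₀) volume 0 (2 * Real.pi) := by
    rw [intervalIntegrable_iff]
    apply MeasureTheory.Integrable.mono' (g := fun _ => C)
    · apply (integrableOn_const_iff (C := C)).mpr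
      right
      rw [Set.uIoc]
      exact measure_Ioc_lt_top
    · exact hFd_meas
    · exact Filter.Eventually.of_forall fun θ =>
        hFdb x₀ (mem_closedBall_self hε.le) θ
  set Ψ : (P n l →L[ℂ] Fn n) →L[ℂ] ℂ :=
    (ContinuousLinearMap.proj (R := ℂ) (φ := fun _ : Fin n => ℂ) i).comp
      (ContinuousLinearMap.apply ℂ (Fn n) (Pi.single j u)) with hΨ
  have hzero : ∀ θ : ℝ, Ψ (Fd2 x₀ θ) = 0 := by
    intro θ
    obtain ⟨u', hu'⟩ := hPQ (circleMap 0 s θ)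
    have hy : crv x₀ (circleMap 0 s θ) ∈ U := hTU (hmemT x₀ (mem_closedBall_self hε.le) θ)
    have hdy : DifferentiableAt ℂ f (crv x₀ (circleMap 0 s θ)) :=
      hf.1.differentiableAt (hU.mem_nhds hy)
    have harg : (Pm + circleMap 0 s θ • Qm) (Pi.single j u) = Pi.single j u' := by
      simpa [ContinuousLinearMap.add_apply, ContinuousLinearMap.smul_apply] using hu'
    have hcompf : fderiv ℂ (fun z => f z i) (crv x₀ (circleMap 0 s θ)) (Pi.single j u')
        = (fderiv ℂ f (crv x₀ (circleMap 0 s θ)) (Pi.single j u')) i := by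
      have hcc := (((ContinuousLinearMap.proj (R := ℂ) (φ := fun _ : Fin n => ℂ)
        i).hasFDerivAt).comp (crv x₀ (circleMap 0 s θ)) hdy.hasFDerivAt).fderiv
      calc fderiv ℂ (fun z => f z i) (crv x₀ (circleMap 0 s θ)) (Pi.single j u')
          = fderiv ℂ ((ContinuousLinearMap.proj (R := ℂ) (φ := fun _ : Fin n => ℂ) i) ∘ f)
            (crv x₀ (circleMap 0 s θ)) (Pi.single j u') := rfl
        _ = ((ContinuousLinearMap.proj (R := ℂ) (φ := fun _ : Fin n => ℂ) i).comp
            (fderiv ℂ f (crv x₀ (circleMap 0 s θ)))) (Pi.single j u') := by rw [hcc]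
        _ = (fderiv ℂ f (crv x₀ (circleMap 0 s θ)) (Pi.single j u')) i := rfl
    have h0 : (fderiv ℂ f (crv x₀ (circleMap 0 s θ)) (Pi.single j u')) i = 0 := by
      rw [← hcompf]
      exact hf.2 _ hy i j hij u'
    rw [hΨ]
    simp only [hFd2, ContinuousLinearMap.coe_comp', Function.comp_apply,
      ContinuousLinearMap.apply_apply, ContinuousLinearMap.proj_apply,
      ContinuousLinearMap.smul_apply, Pi.smul_apply, ContinuousLinearMap.comp_apply]
    rw [harg, h0, smul_zero]
  have hcomm : Ψ (∫ θ in (0 : ℝ)..2 * Real.pi, Fd2 x₀ θ)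
      = ∫ θ in (0 : ℝ)..2 * Real.pi, Ψ (Fd2 x₀ θ) :=
    (Ψ.intervalIntegral_comp_comm hintFd).symm
  have hfinal : Ψ (∫ θ in (0 : ℝ)..2 * Real.pi, Fd2 x₀ θ) = 0 := by
    rw [hcomm]
    simp only [hzero]
    simp
  exact hfinal


/-- The coefficient functions are `ℂⁿ`-holomorphic on `U`. -/
theorem coeffFn_cnHolo {U : Set (P n l)} (hU : IsOpen U) {f : P n l → Fn n}
    (hf : CnHolo U f) (m : ℕ) (v : P n l) : CnHolo U (coeffFn f U m v) := by
  -- pointwise local data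
  have hloc : ∀ a ∈ U, DifferentiableAt ℂ (coeffFn f U m v) a ∧
      ∀ i j : Fin n, i ≠ j → ∀ u : Fin (l j) → ℂ,
        fderiv ℂ (fun x => coeffFn f U m v x i) a (Pi.single j u) = 0 := by
    intro a ha
    obtain ⟨ρ, hρ, hρU⟩ := Metric.isOpen_iff.mp hU a ha
    set s : ℝ := ρ / (4 * (‖v‖ + 1)) with hsdef
    have hs : 0 < s := by positivity
    set ε : ℝ := ρ / 4 with hεdef
    have hε : 0 < ε := by positivity
    have htube : ∀ x ∈ closedBall a ε, ∀ ζ : ℂ, ‖ζ‖ ≤ s →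
        (0 : P n l) + ζ • v + ((ContinuousLinearMap.id ℂ (P n l)) x
          + ζ • (0 : P n l →L[ℂ] P n l) x) ∈ U := by
      intro x hx ζ hζ
      apply hρU
      rw [mem_ball]
      simp only [ContinuousLinearMap.id_apply, ContinuousLinearMap.zero_apply, smul_zero,
        add_zero, zero_add]
      have h1 : dist (ζ • v + x) a ≤ ‖ζ • v‖ + dist x a := by
        calc dist (ζ • v + x) a ≤ dist (ζ • v + x) x + dist x a := dist_triangle _ _ _
          _ = ‖ζ • v‖ + dist x a := by rw [dist_add_self_left]
      have h2 : ‖ζ • v‖ ≤ s * (‖v‖ + 1) := by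
        rw [norm_smul]
        calc ‖ζ‖ * ‖v‖ ≤ s * ‖v‖ := mul_le_mul_of_nonneg_right hζ (norm_nonneg _)
          _ ≤ s * (‖v‖ + 1) := by nlinarith
      have h3 : s * (‖v‖ + 1) = ρ / 4 := by
        rw [hsdef]; field_simp
      have h4 : dist x a ≤ ε := mem_closedBall.mp hx
      calc dist (ζ • v + x) a ≤ s * (‖v‖ + 1) + ε := by linarith [h1, h2.trans_eq h3, h4]
        _ < ρ := by rw [h3, hεdef]; linarith
    have hpar := param hU hf m hs hε 0 v (ContinuousLinearMap.id ℂ (P n l)) 0 a htube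
    have hadm : ∀ x ∈ closedBall a ε, adm U x v s := by
      intro x hx
      refine ⟨hs, fun ζ hζ => ?_⟩
      have := htube x hx ζ hζ
      simpa only [ContinuousLinearMap.id_apply, ContinuousLinearMap.zero_apply, smul_zero,
        add_zero, zero_add, add_comm] using this
    have hEv : coeffFn f U m v =ᶠ[nhds a]
        (fun x => cauchyPowerSeries (fun ζ : ℂ => f ((0 : P n l) + ζ • v
          + ((ContinuousLinearMap.id ℂ (P n l)) x + ζ • (0 : P n l →L[ℂ] P n l) x))) 0 s m
          (fun _ => 1)) := by
      filter_upwards [closedBall_mem_nhds a hε] with x hx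
      rw [coeffFn_eq hU hf.1 (hadm x hx) m]
      have hfun : (fun ζ : ℂ => f (x + ζ • v)) = (fun ζ : ℂ => f ((0 : P n l) + ζ • v
          + ((ContinuousLinearMap.id ℂ (P n l)) x + ζ • (0 : P n l →L[ℂ] P n l) x))) := by
        funext ζ
        simp only [ContinuousLinearMap.id_apply, ContinuousLinearMap.zero_apply, smul_zero,
          add_zero, zero_add]
        rw [add_comm]
      rw [hfun]
    constructor
    · exact (hEv.differentiableAt_iff).mpr hpar.1
    · intro i j hij u
      have hEvi : (fun x => coeffFn f U m v x i) =ᶠ[nhds a]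
          (fun x => (cauchyPowerSeries (fun ζ : ℂ => f ((0 : P n l) + ζ • v
            + ((ContinuousLinearMap.id ℂ (P n l)) x + ζ • (0 : P n l →L[ℂ] P n l) x))) 0 s m
            (fun _ => 1)) i) := by
        filter_upwards [hEv] with x hx
        rw [hx]
      rw [hEvi.fderiv_eq]
      apply hpar.2 i j hij u
      intro ζ
      exact ⟨u, by simp⟩
  constructor
  · exact fun a ha => (hloc a ha).1.differentiableWithinAt
  · exact fun a ha => (hloc a ha).2

/-- Differentiability and block-vanishing for the terms of the expansion series around `z`. -/
theorem term_holo {U : Set (P n l)} (hU : IsOpen U) {f : P n l → Fn n}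
    (hf : CnHolo U f) {z : P n l} (hz : z ∈ U) (m : ℕ) (x₀ : P n l) :
    DifferentiableAt ℂ (fun x => coeffFn f U m (x - z) z) x₀ ∧
      ∀ i j : Fin n, i ≠ j → ∀ u : Fin (l j) → ℂ,
        fderiv ℂ (fun x => coeffFn f U m (x - z) z i) x₀ (Pi.single j u) = 0 := by
  obtain ⟨d₀, hd₀, hd₀U⟩ := Metric.isOpen_iff.mp hU z hz
  set s : ℝ := d₀ / (2 * (‖x₀ - z‖ + 2)) with hsdef
  have hs : 0 < s := by positivity
  have hpt : ∀ (x : P n l) (ζ : ℂ), z + ζ • (-z) + ((0 : P n l →L[ℂ] P n l) x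
      + ζ • (ContinuousLinearMap.id ℂ (P n l)) x) = z + ζ • (x - z) := by
    intro x ζ
    simp only [ContinuousLinearMap.zero_apply, ContinuousLinearMap.id_apply, zero_add,
      smul_sub, smul_neg]
    abel
  have htube : ∀ x ∈ closedBall x₀ (1:ℝ), ∀ ζ : ℂ, ‖ζ‖ ≤ s →
      z + ζ • (-z) + ((0 : P n l →L[ℂ] P n l) x
        + ζ • (ContinuousLinearMap.id ℂ (P n l)) x) ∈ U := by
    intro x hx ζ hζ
    rw [hpt x ζ]
    apply hd₀U
    rw [mem_ball, dist_eq_norm, add_sub_cancel_left, norm_smul]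
    have hxz : ‖x - z‖ ≤ ‖x₀ - z‖ + 1 := by
      calc ‖x - z‖ = ‖(x - x₀) + (x₀ - z)‖ := by abel_nf
        _ ≤ ‖x - x₀‖ + ‖x₀ - z‖ := norm_add_le _ _
        _ ≤ 1 + ‖x₀ - z‖ := by
            have := mem_closedBall.mp hx
            rw [dist_eq_norm] at this
            linarith
        _ = ‖x₀ - z‖ + 1 := by ring
    have h1 : ‖ζ‖ * ‖x - z‖ ≤ s * (‖x₀ - z‖ + 1) :=
      mul_le_mul hζ hxz (norm_nonneg _) hs.le
    have h2 : s * (‖x₀ - z‖ + 2) = d₀ / 2 := by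
      rw [hsdef]; field_simp
    nlinarith [norm_nonneg (x₀ - z)]
  have hpar := param hU hf m hs one_pos z (-z) 0 (ContinuousLinearMap.id ℂ (P n l)) x₀ htube
  have hadm : ∀ x ∈ closedBall x₀ (1:ℝ), adm U z (x - z) s := by
    intro x hx
    refine ⟨hs, fun ζ hζ => ?_⟩
    have := htube x hx ζ hζ
    rwa [hpt x ζ] at this
  have hEv : (fun x => coeffFn f U m (x - z) z) =ᶠ[nhds x₀]
      (fun x => cauchyPowerSeries (fun ζ : ℂ => f (z + ζ • (-z)
        + ((0 : P n l →L[ℂ] P n l) x + ζ • (ContinuousLinearMap.id ℂ (P n l)) x))) 0 s m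
        (fun _ => 1)) := by
    filter_upwards [closedBall_mem_nhds x₀ one_pos] with x hx
    rw [coeffFn_eq hU hf.1 (hadm x hx) m]
    have hfun : (fun ζ : ℂ => f (z + ζ • (x - z))) = (fun ζ : ℂ => f (z + ζ • (-z)
        + ((0 : P n l →L[ℂ] P n l) x + ζ • (ContinuousLinearMap.id ℂ (P n l)) x))) := by
      funext ζ
      rw [hpt x ζ]
    rw [hfun]
  constructor
  · exact (hEv.differentiableAt_iff).mpr hpar.1
  · intro i j hij u
    have hEvi : (fun x => coeffFn f U m (x - z) z i) =ᶠ[nhds x₀]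
        (fun x => (cauchyPowerSeries (fun ζ : ℂ => f (z + ζ • (-z)
          + ((0 : P n l →L[ℂ] P n l) x + ζ • (ContinuousLinearMap.id ℂ (P n l)) x))) 0 s m
          (fun _ => 1)) i) := by
      filter_upwards [hEv] with x hx
      rw [hx]
    rw [hEvi.fderiv_eq]
    apply hpar.2 i j hij u
    intro ζ
    refine ⟨ζ • u, ?_⟩
    simp [Pi.single_smul]


end CnAux

end

open CnAux in
/-- A domain of `ℂⁿ`-holomorphy is `ℂⁿ`-holomorphically convex. -/
theorem isCnHoloConvex_of_isDomainOfCnHolomorphy {n : ℕ} {l : Fin n → ℕ}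
    (U : Set (∀ j, Fin (l j) → ℂ)) (hU : IsOpen U)
    (h : IsDomainOfCnHolomorphy U) : IsCnHoloConvex U := by

  intro K hKU hK
  by_cases hsub : Subsingleton (∀ j, Fin (l j) → ℂ)
  · haveI := hsub
    haveI : Finite (∀ j, Fin (l j) → ℂ) := Finite.of_subsingleton
    exact (Set.finite_univ.subset (Set.subset_univ _)).isCompact
  haveI hnt : Nontrivial (∀ j, Fin (l j) → ℂ) := not_subsingleton_iff_nontrivial.mp hsub
  have hn : Nonempty (Fin n) := by
    by_contra hne
    exact hsub ⟨fun a b => funext fun j => absurd ⟨j⟩ hne⟩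
  rcases K.eq_empty_or_nonempty with rfl | hKne
  · have hhull : cnHull U ∅ = ∅ := by
      rw [Set.eq_empty_iff_forall_notMem]
      intro z hz
      have hconst : CnHolo U (fun _ => fun _ : Fin n => (1 : ℂ)) := by
        constructor
        · exact (differentiable_const _).differentiableOn
        · intro a ha i j hij v
          simp
      have hle := hz.2 _ hconst
      rw [Set.image_empty, Real.sSup_empty] at hle
      haveI := hn
      rw [pi_norm_const] at hle
      norm_num at hle
    rw [hhull]; exact isCompact_empty
  obtain ⟨r, hr, hrU⟩ := hK.exists_cthickening_subset_open hU hKU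
  -- main claim : hull points are at distance ≥ r/4 from the complement
  have claim : ∀ z ∈ cnHull U K, ball z (r / 4) ⊆ U := by
    intro z hz
    by_contra hcc
    obtain ⟨w, hwb, hwU⟩ := Set.not_subset.mp hcc
    obtain ⟨d₁, hd₁, hd₁U⟩ := Metric.isOpen_iff.mp hU z hz.1
    set d₀ : ℝ := min d₁ (r / 4) with hd₀def
    have hd₀ : 0 < d₀ := lt_min hd₁ (by positivity)
    have hd₀U : ball z d₀ ⊆ U := (ball_subset_ball (min_le_left _ _)).trans hd₁U
    have hd₀r : d₀ ≤ r / 4 := min_le_right _ _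
    obtain ⟨f₀, hf₀, hbad⟩ := h (ball z (r / 4)) (ball z (d₀ / 2)) isOpen_ball isOpen_ball
      ⟨⟨z, mem_ball_self (by positivity)⟩, (convex_ball z (r / 4)).isPreconnected⟩
      ⟨w, hwb, hwU⟩ ⟨z, mem_ball_self (by positivity)⟩
      (fun y hy => ⟨hd₀U (ball_subset_ball (by linarith) hy),
        ball_subset_ball (by linarith) hy⟩)
    obtain ⟨M, hM⟩ := (hK.cthickening (r := r)).exists_bound_of_continuousOn
      (hf₀.1.continuousOn.mono hrU)
    have hM0 : 0 ≤ M := (norm_nonneg _).trans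
      (hM hKne.choose (self_subset_cthickening _ hKne.choose_spec))
    have hthick : ∀ w' ∈ K, ∀ v : ∀ j, Fin (l j) → ℂ, ‖v‖ ≤ r / 2 → ∀ ζ : ℂ, ‖ζ‖ ≤ 2 →
        w' + ζ • v ∈ cthickening r K := by
      intro w' hw' v hv ζ hζ
      apply mem_cthickening_of_dist_le (w' + ζ • v) w' r K hw'
      rw [dist_eq_norm, add_sub_cancel_left, norm_smul]
      calc ‖ζ‖ * ‖v‖ ≤ 2 * (r / 2) := by
            apply mul_le_mul hζ hv (norm_nonneg _) (by norm_num)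
        _ = r := by ring
    have hcoeffK : ∀ (m : ℕ) (v : ∀ j, Fin (l j) → ℂ), ‖v‖ ≤ r / 2 → ∀ w' ∈ K,
        ‖coeffFn f₀ U m v w'‖ ≤ M / 2 ^ m := by
      intro m v hv w' hw'
      exact coeffFn_norm_le hU hf₀.1
        ⟨two_pos, fun ζ hζ => hrU (hthick w' hw' v hv ζ hζ)⟩
        (fun ζ hζ => hM _ (hthick w' hw' v hv ζ hζ)) m
    have hcoeffZ : ∀ (m : ℕ) (v : ∀ j, Fin (l j) → ℂ), ‖v‖ ≤ r / 2 →
        ‖coeffFn f₀ U m v z‖ ≤ M / 2 ^ m := by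
      intro m v hv
      refine le_trans (hz.2 _ (coeffFn_cnHolo hU hf₀ m v)) (Real.sSup_le ?_ (by positivity))
      rintro b ⟨w', hw', rfl⟩
      exact hcoeffK m v hv w' hw'
    set t : ℕ → (∀ j, Fin (l j) → ℂ) → (Fin n → ℂ) := fun m x => coeffFn f₀ U m (x - z) z
      with ht
    have htdiff : ∀ (m : ℕ) x₀, DifferentiableAt ℂ (t m) x₀ ∧
        ∀ i j : Fin n, i ≠ j → ∀ u : Fin (l j) → ℂ,
          fderiv ℂ (fun x => t m x i) x₀ (Pi.single j u) = 0 :=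
      fun m x₀ => term_holo hU hf₀ hz.1 m x₀
    have htb : ∀ (m : ℕ), ∀ y ∈ ball z (r / 2), ‖t m y‖ ≤ M / 2 ^ m := by
      intro m y hy
      apply hcoeffZ m (y - z)
      rw [mem_ball, dist_eq_norm] at hy
      linarith
    set u : ℕ → ℝ := fun m => 2 / (r / 4) * M * (1 / 2) ^ m with hu
    have hu_eq : ∀ m, u m = 2 / (r / 4) * (M / 2 ^ m) := by
      intro m
      simp only [hu, div_pow, one_pow]
      ring
    have hsu : Summable u := (summable_geometric_two.mul_left _)
    have hVsub : ∀ x ∈ ball z (r / 4), ball x (r / 4) ⊆ ball z (r / 2) := by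
      intro x hx y hy
      rw [mem_ball] at hx hy ⊢
      calc dist y z ≤ dist y x + dist x z := dist_triangle _ _ _
        _ < r / 4 + r / 4 := add_lt_add hy hx
        _ = r / 2 := by ring
    have hub : ∀ (m : ℕ), ∀ x ∈ ball z (r / 4), ‖fderiv ℂ (t m) x‖ ≤ u m := by
      intro m x hx
      rw [hu_eq m]
      apply ContinuousLinearMap.opNorm_le_bound _ (by positivity)
      intro v'
      exact fderiv_bound (by positivity)
        (fun y hy => ((htdiff m y).1).differentiableWithinAt)
        (fun y hy => htb m y (hVsub x hx hy)) v'
    have hsM : Summable (fun m : ℕ => M * (1 / 2) ^ m) := summable_geometric_two.mul_left _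
    have htsum : ∀ x ∈ ball z (r / 2), Summable (fun m => t m x) := by
      intro x hx
      apply Summable.of_norm_bounded hsM
      intro m
      calc ‖t m x‖ ≤ M / 2 ^ m := htb m x hx
        _ = M * (1 / 2) ^ m := by rw [div_pow, one_pow]; ring
    set g : (∀ j, Fin (l j) → ℂ) → (Fin n → ℂ) := fun x => ∑' m, t m x with hg
    have hgderiv : ∀ x ∈ ball z (r / 4), HasFDerivAt g (∑' m, fderiv ℂ (t m) x) x := by
      intro x hx
      apply hasFDerivAt_of_tendstoUniformlyOn (l := Filter.atTop)
        (f := fun (N : Finset ℕ) x => ∑ m ∈ N, t m x)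
        (f' := fun (N : Finset ℕ) x => ∑ m ∈ N, fderiv ℂ (t m) x)
        isOpen_ball (tendstoUniformlyOn_tsum hsu (fun m x hx => hub m x hx))
        (fun N x _ => HasFDerivAt.fun_sum (fun m _ => ((htdiff m x).1).hasFDerivAt))
        (fun x hx => (htsum x (ball_subset_ball (by linarith) hx)).hasSum) hx
    have hgholo : CnHolo (ball z (r / 4)) g := by
      constructor
      · exact fun x hx => ((hgderiv x hx).differentiableAt).differentiableWithinAt
      · intro a ha i j hij u'
        have hsumD : Summable (fun m => fderiv ℂ (t m) a) :=
          Summable.of_norm_bounded hsu (fun m => hub m a ha)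
        have hfd : fderiv ℂ (fun x => g x i) a
            = (ContinuousLinearMap.proj (R := ℂ) (φ := fun _ : Fin n => ℂ) i).comp
              (∑' m, fderiv ℂ (t m) a) :=
          (((ContinuousLinearMap.proj (R := ℂ) (φ := fun _ : Fin n => ℂ)
            i).hasFDerivAt).comp a (hgderiv a ha)).fderiv
        rw [hfd]
        set Ψ : ((∀ j, Fin (l j) → ℂ) →L[ℂ] (Fin n → ℂ)) →L[ℂ] ℂ :=
          (ContinuousLinearMap.proj (R := ℂ) (φ := fun _ : Fin n => ℂ) i).comp
            (ContinuousLinearMap.apply ℂ (Fin n → ℂ) (Pi.single j u')) with hΨ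
        have h1 : ((ContinuousLinearMap.proj (R := ℂ) (φ := fun _ : Fin n => ℂ) i).comp
            (∑' m, fderiv ℂ (t m) a)) (Pi.single j u') = Ψ (∑' m, fderiv ℂ (t m) a) := rfl
        rw [h1, Ψ.map_tsum hsumD]
        have h2 : ∀ m : ℕ, Ψ (fderiv ℂ (t m) a) = 0 := by
          intro m
          have h3 := (htdiff m a).2 i j hij u'
          have h4 : fderiv ℂ (fun x => t m x i) a
              = (ContinuousLinearMap.proj (R := ℂ) (φ := fun _ : Fin n => ℂ) i).comp
                (fderiv ℂ (t m) a) :=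
            (((ContinuousLinearMap.proj (R := ℂ) (φ := fun _ : Fin n => ℂ)
              i).hasFDerivAt).comp a ((htdiff m a).1).hasFDerivAt).fderiv
          rw [h4] at h3
          exact h3
        simp only [h2]
        exact tsum_zero
    have heq : Set.EqOn f₀ g (ball z (d₀ / 2)) := by
      intro x hx
      have hvx : ‖x - z‖ < d₀ / 2 := by
        rw [mem_ball, dist_eq_norm] at hx
        exact hx
      have hden : 0 < d₀ / 2 + ‖x - z‖ := by positivity
      set s₀ : ℝ := d₀ / (d₀ / 2 + ‖x - z‖) with hs₀
      have hs₀1 : 1 < s₀ := by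
        rw [hs₀, lt_div_iff₀ hden]
        linarith
      have hadm : adm U z (x - z) s₀ := by
        refine ⟨by linarith, fun ζ hζ => hd₀U ?_⟩
        rw [mem_ball, dist_eq_norm, add_sub_cancel_left, norm_smul]
        have h5 : ‖ζ‖ * ‖x - z‖ ≤ s₀ * ‖x - z‖ :=
          mul_le_mul_of_nonneg_right hζ (norm_nonneg _)
        have h6 : s₀ * ‖x - z‖ < d₀ := by
          rw [hs₀, div_mul_eq_mul_div, div_lt_iff₀ hden]
          nlinarith [norm_nonneg (x - z)]
        linarith
      have hsum := coeffFn_hasSum hU hf₀.1 hadm hs₀1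
      rw [show z + (x - z) = x from by abel] at hsum
      exact (hsum.tsum_eq).symm
    exact hbad g hgholo heq
  -- boundedness
  have hbdd : Bornology.IsBounded (cnHull U K) := by
    rw [isBounded_iff_forall_norm_le]
    have hcoord : ∀ (j₁ : Fin n) (k : Fin (l j₁)), ∃ B : ℝ, 0 ≤ B ∧
        ∀ z ∈ cnHull U K, ‖z j₁ k‖ ≤ B := by
      intro j₁ k
      set L : (∀ j, Fin (l j) → ℂ) →ₗ[ℂ] (Fin n → ℂ) :=
        { toFun := fun w => Pi.single (M := fun _ : Fin n => ℂ) j₁ (w j₁ k)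
          map_add' := by
            intro a b
            simp only [Pi.add_apply]
            rw [← Pi.single_add]
          map_smul' := by
            intro c a
            simp only [Pi.smul_apply, RingHom.id_apply]
            rw [← Pi.single_smul] } with hL
      set Lc : (∀ j, Fin (l j) → ℂ) →L[ℂ] (Fin n → ℂ) := LinearMap.toContinuousLinearMap L
        with hLc
      have hLc_eq : ∀ w, Lc w = Pi.single (M := fun _ : Fin n => ℂ) j₁ (w j₁ k) :=
        fun w => rfl
      have hnLc : ∀ w, ‖Lc w‖ = ‖w j₁ k‖ := by
        intro w
        rw [hLc_eq]
        apply le_antisymm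
        · apply pi_norm_le_iff_of_nonneg (norm_nonneg _) |>.mpr
          intro i
          rcases eq_or_ne i j₁ with rfl | hij₁
          · rw [Pi.single_eq_same]
          · rw [Pi.single_eq_of_ne hij₁]; simp
        · have := norm_le_pi_norm (Pi.single (M := fun _ : Fin n => ℂ) j₁ (w j₁ k)) j₁
          rwa [Pi.single_eq_same] at this
      have hCn : CnHolo U (fun w => Lc w) := by
        constructor
        · exact Lc.differentiable.differentiableOn
        · intro a ha i j hij v
          have h4 : fderiv ℂ (fun x => Lc x i) a
              = (ContinuousLinearMap.proj (R := ℂ) (φ := fun _ : Fin n => ℂ) i).comp Lc :=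
            (((ContinuousLinearMap.proj (R := ℂ) (φ := fun _ : Fin n => ℂ)
              i).hasFDerivAt).comp a Lc.hasFDerivAt).fderiv
          rw [h4]
          simp only [ContinuousLinearMap.coe_comp', Function.comp_apply,
            ContinuousLinearMap.proj_apply]
          rw [hLc_eq]
          rcases eq_or_ne i j₁ with rfl | hij₁
          · rw [Pi.single_eq_same]
            rw [Pi.single_eq_of_ne hij]
            rfl
          · rw [Pi.single_eq_of_ne hij₁]
      refine ⟨sSup ((fun w => ‖Lc w‖) '' K), ?_, ?_⟩
      · obtain ⟨k₀, hk₀⟩ := hKne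
        have : ‖Lc k₀‖ ∈ (fun w => ‖Lc w‖) '' K := ⟨k₀, hk₀, rfl⟩
        have hb : BddAbove ((fun w => ‖Lc w‖) '' K) :=
          (hK.image (Lc.continuous.norm)).bddAbove
        exact le_trans (norm_nonneg _) (le_csSup hb this)
      · intro z hz
        have := hz.2 _ hCn
        rwa [hnLc z] at this
    choose B hB0 hB using hcoord
    refine ⟨∑ j₁ : Fin n, ∑ k : Fin (l j₁), B j₁ k, ?_⟩
    intro z hz
    have hCnonneg : 0 ≤ ∑ j₁ : Fin n, ∑ k : Fin (l j₁), B j₁ k :=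
      Finset.sum_nonneg fun j₁ _ => Finset.sum_nonneg fun k _ => hB0 j₁ k
    apply (pi_norm_le_iff_of_nonneg hCnonneg).mpr
    intro j₁
    apply (pi_norm_le_iff_of_nonneg hCnonneg).mpr
    intro k
    calc ‖z j₁ k‖ ≤ B j₁ k := hB j₁ k z hz
      _ ≤ ∑ k' : Fin (l j₁), B j₁ k' :=
          Finset.single_le_sum (fun k' _ => hB0 j₁ k') (Finset.mem_univ k)
      _ ≤ ∑ j₂ : Fin n, ∑ k' : Fin (l j₂), B j₂ k' :=
          Finset.single_le_sum (f := fun j₂ => ∑ k' : Fin (l j₂), B j₂ k')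
            (fun j₂ _ => Finset.sum_nonneg fun k' _ => hB0 j₂ k') (Finset.mem_univ j₁)
  -- closedness
  have hclosed : IsClosed (cnHull U K) := by
    apply isClosed_of_closure_subset
    intro x hx
    obtain ⟨y, hy, hyd⟩ := Metric.mem_closure_iff.mp hx (r / 8) (by positivity)
    have hxU : x ∈ U := claim y hy (by
      rw [mem_ball, dist_comm]
      calc dist y x < r / 8 := by rwa [dist_comm] at hyd
        _ < r / 4 := by linarith)
    refine ⟨hxU, ?_⟩
    intro f' hf'
    have hca : ContinuousAt (fun w => ‖f' w‖) x :=
      ((hf'.1.continuousOn.continuousAt (hU.mem_nhds hxU)).norm)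
    haveI hne : (nhdsWithin x (cnHull U K)).NeBot := mem_closure_iff_nhdsWithin_neBot.mp hx
    exact le_of_tendsto hca.continuousWithinAt.tendsto
      (eventually_nhdsWithin_of_forall (fun y' (hy' : y' ∈ cnHull U K) => hy'.2 f' hf'))
  exact isCompact_of_isClosed_isBounded hclosed hbdd
end

section
/- Let U ⊊ C^{l1}×...×C^{ln} be a C^n-holomorphically convex open set, and let {a_k} be a sequence in U. For each k, set B_k := { z ∈ U : |a_k − z| < dist(a_k, complement of U) } (sup-norm distance). Then there exists f ∈ O_{l1,...,ln}(U) such that sup_{z∈B_k} |f(z)| = +∞ for every k. -/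
open Set Metric

open Filter Topology

/- ### Auxiliary lemmas -/

section Aux
variable {E F' : Type*} [NormedAddCommGroup E] [NormedSpace ℂ E]
    [NormedAddCommGroup F'] [NormedSpace ℂ F']

lemma slice_hasDerivAt {f : E → F'} {x : E} (w : E) (t0 : ℂ)
    (hf : DifferentiableAt ℂ f (x + t0 • w)) :
    HasDerivAt (fun t : ℂ => f (x + t • w)) (fderiv ℂ f (x + t0 • w) w) t0 := by
  have hc : HasDerivAt (fun t : ℂ => x + t • w) w t0 := by
    simpa using ((hasDerivAt_id t0).smul_const w).const_add x
  exact hf.hasFDerivAt.comp_hasDerivAt t0 hc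

lemma cauchy_deriv_bound [CompleteSpace F'] {f : ℂ → F'} {V : Set ℂ} (hV : IsOpen V)
    (hf : DifferentiableOn ℂ f V) {r M : ℝ} (hr : 0 < r) (hb : closedBall 0 r ⊆ V)
    (hM : ∀ t ∈ sphere (0:ℂ) r, ‖f t‖ ≤ M) : ‖deriv f 0‖ ≤ M / r := by
  rw [← Complex.cderiv_eq_deriv hV hf hr hb]
  exact Complex.norm_cderiv_le hr hM

lemma fderiv_norm_le_of_bound [CompleteSpace F'] {f : E → F'} {U : Set E} (hU : IsOpen U)
    (hf : DifferentiableOn ℂ f U) {x : E} {r δ : ℝ} (hr : 0 < r) (hδ : 0 ≤ δ)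
    (hb : closedBall x r ⊆ U) (hbound : ∀ y ∈ closedBall x r, ‖f y‖ ≤ δ) :
    ‖fderiv ℂ f x‖ ≤ δ / r := by
  have hx : x ∈ U := hb (mem_closedBall_self hr.le)
  refine ContinuousLinearMap.opNorm_le_bound _ (div_nonneg hδ hr.le) ?_
  intro v
  rcases eq_or_ne v 0 with rfl | hv
  · simp
  set u : E := (‖v‖ : ℂ)⁻¹ • v with hu
  have hu1 : ‖u‖ = 1 := norm_smul_inv_norm hv
  have hmem : ∀ t : ℂ, ‖t‖ ≤ r → x + t • u ∈ closedBall x r := by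
    intro t ht
    have : dist (x + t • u) x = ‖t‖ := by
      rw [dist_eq_norm, add_sub_cancel_left, norm_smul, hu1, mul_one]
    simpa [mem_closedBall, this]
  set V : Set ℂ := (fun t : ℂ => x + t • u) ⁻¹' U with hV
  have hVo : IsOpen V := hU.preimage (by continuity)
  have hbV : closedBall 0 r ⊆ V := fun t ht => by
    simp only [mem_closedBall, dist_zero_right] at ht
    exact hb (hmem t ht)
  have haff : Differentiable ℂ (fun t : ℂ => x + t • u) :=
    (differentiable_id.smul_const u).const_add x
  have hψ : DifferentiableOn ℂ (fun t : ℂ => f (x + t • u)) V :=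
    hf.comp haff.differentiableOn (fun t ht => ht)
  have hMψ : ∀ t ∈ sphere (0:ℂ) r, ‖f (x + t • u)‖ ≤ δ := by
    intro t ht
    rw [mem_sphere_iff_norm, sub_zero] at ht
    exact hbound _ (hmem t ht.le)
  have hest := cauchy_deriv_bound hVo hψ hr hbV hMψ
  have hdiff : DifferentiableAt ℂ f (x + (0:ℂ) • u) := by
    simpa using hf.differentiableAt (hU.mem_nhds hx)
  have hder := (slice_hasDerivAt u 0 hdiff).deriv
  have hderiv0 : deriv (fun t : ℂ => f (x + t • u)) 0 = fderiv ℂ f x u := by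
    rw [hder]; norm_num
  rw [hderiv0] at hest
  have hvu : ((‖v‖ : ℂ)) • u = v := by
    rw [hu, smul_inv_smul₀]
    simpa using norm_ne_zero_iff.mpr hv
  calc ‖fderiv ℂ f x v‖ = ‖fderiv ℂ f x ((‖v‖ : ℂ) • u)‖ := by rw [hvu]
    _ = ‖v‖ * ‖fderiv ℂ f x u‖ := by
        rw [map_smul, norm_smul, Complex.norm_real, Real.norm_eq_abs,
          abs_of_nonneg (norm_nonneg v)]
    _ ≤ ‖v‖ * (δ / r) := mul_le_mul_of_nonneg_left hest (norm_nonneg v)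
    _ = δ / r * ‖v‖ := mul_comm _ _

open Classical in
lemma weierstrass [ProperSpace E] [CompleteSpace F'] {U : Set E} (hU : IsOpen U)
    {G : ℕ → E → F'} {g : E → F'} (hd : ∀ m, DifferentiableOn ℂ (G m) U)
    (hg : TendstoLocallyUniformlyOn G g atTop U) : DifferentiableOn ℂ g U := by
  intro x0 hx0
  obtain ⟨ε, hε, hball⟩ := Metric.isOpen_iff.mp hU x0 hx0
  set r : ℝ := ε / 3 with hrdef
  have hr : 0 < r := by positivity
  have h2rU : closedBall x0 (2 * r) ⊆ U := by
    refine Subset.trans ?_ hball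
    intro y hy
    simp only [mem_closedBall] at hy
    have : 2 * r < ε := by rw [hrdef]; linarith
    exact mem_ball.mpr (lt_of_le_of_lt hy this)
  have hballr : ball x0 r ⊆ U := fun y hy =>
    hball (ball_subset_ball (by rw [hrdef]; linarith) hy)
  have htu : TendstoUniformlyOn G g atTop (closedBall x0 (2 * r)) :=
    (tendstoLocallyUniformlyOn_iff_forall_isCompact hU).mp hg _ h2rU (isCompact_closedBall _ _)
  have huc : UniformCauchySeqOn G atTop (closedBall x0 (2 * r)) := htu.uniformCauchySeqOn
  have hdc : UniformCauchySeqOn (fun m x => fderiv ℂ (G m) x) atTop (ball x0 r) := by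
    rw [Metric.uniformCauchySeqOn_iff]
    intro εd hεd
    obtain ⟨N, hN⟩ := Metric.uniformCauchySeqOn_iff.mp huc (εd * r / 2) (by positivity)
    refine ⟨N, fun m hm p hp x hx => ?_⟩
    have hxU : x ∈ U := hballr hx
    have hdm : DifferentiableAt ℂ (G m) x := (hd m).differentiableAt (hU.mem_nhds hxU)
    have hdp : DifferentiableAt ℂ (G p) x := (hd p).differentiableAt (hU.mem_nhds hxU)
    have hsub : closedBall x r ⊆ closedBall x0 (2 * r) := by
      intro y hy
      simp only [mem_closedBall] at hy ⊢
      have := (mem_ball.mp hx).le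
      calc dist y x0 ≤ dist y x + dist x x0 := dist_triangle _ _ _
        _ ≤ r + r := add_le_add hy this
        _ = 2 * r := by ring
    have hDdiff : DifferentiableOn ℂ (fun y => G m y - G p y) U := (hd m).sub (hd p)
    have hDb : ∀ y ∈ closedBall x r, ‖G m y - G p y‖ ≤ εd * r / 2 := by
      intro y hy
      have := hN m hm p hp y (hsub hy)
      rw [dist_eq_norm] at this
      exact this.le
    have hfd := fderiv_norm_le_of_bound hU hDdiff hr (by positivity)
      (hsub.trans h2rU) hDb
    have heq : fderiv ℂ (fun y => G m y - G p y) x = fderiv ℂ (G m) x - fderiv ℂ (G p) x :=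
      fderiv_sub hdm hdp
    have hval : εd * r / 2 / r = εd / 2 := by field_simp
    rw [dist_eq_norm]
    calc ‖fderiv ℂ (G m) x - fderiv ℂ (G p) x‖
        = ‖fderiv ℂ (fun y => G m y - G p y) x‖ := by rw [heq]
      _ ≤ εd * r / 2 / r := hfd
      _ < εd := by rw [hval]; linarith
  set g' : E → (E →L[ℂ] F') := fun x =>
    if h : ∃ L, Tendsto (fun m => fderiv ℂ (G m) x) atTop (𝓝 L) then h.choose else 0 with hg'def
  have hg' : ∀ x ∈ ball x0 r, Tendsto (fun m => fderiv ℂ (G m) x) atTop (𝓝 (g' x)) := by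
    intro x hx
    have hcs : CauchySeq (fun m => fderiv ℂ (G m) x) := by
      rw [Metric.cauchySeq_iff]
      intro εd hεd
      obtain ⟨N, hN⟩ := Metric.uniformCauchySeqOn_iff.mp hdc εd hεd
      exact ⟨N, fun m hm p hp => hN m hm p hp x hx⟩
    obtain ⟨L, hL⟩ := cauchySeq_tendsto_of_complete hcs
    have hex : ∃ L, Tendsto (fun m => fderiv ℂ (G m) x) atTop (𝓝 L) := ⟨L, hL⟩
    rw [hg'def]
    simp only [dif_pos hex]
    exact hex.choose_spec
  have htu' : TendstoUniformlyOn (fun m x => fderiv ℂ (G m) x) g' atTop (ball x0 r) :=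
    hdc.tendstoUniformlyOn_of_tendsto hg'
  have hres := hasFDerivAt_of_tendstoUniformlyOn isOpen_ball htu'
    (fun m x hx => ((hd m).differentiableAt (hU.mem_nhds (hballr hx))).hasFDerivAt)
    (fun x hx => hg.tendsto_at (hballr hx)) (mem_ball_self hr)
  exact hres.differentiableAt.differentiableWithinAt

lemma ball_escapes [ProperSpace E] {U : Set E} (hU : IsOpen U) (hne : Uᶜ.Nonempty)
    {a : E} (ha : a ∈ U) {C : Set E} (hC : IsCompact C) (hCU : C ⊆ U) :
    ∃ z, z ∈ U ∧ dist a z < infDist a Uᶜ ∧ z ∉ C := by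
  set r : ℝ := infDist a Uᶜ with hrdef
  have hr : 0 < r := (hU.isClosed_compl.notMem_iff_infDist_pos hne).mp (by simpa using ha)
  obtain ⟨b, hbc, hbd⟩ := hU.isClosed_compl.exists_infDist_eq_dist hne a
  by_contra hcon
  push_neg at hcon
  have hba : ‖b - a‖ = r := by rw [← dist_eq_norm, dist_comm, ← hbd]
  have hseg : ∀ t : ℝ, 0 ≤ t → t < 1 → a + t • (b - a) ∈ C := by
    intro t ht0 ht1
    have hdist : dist a (a + t • (b - a)) = t * r := by
      rw [dist_self_add_right, norm_smul, Real.norm_eq_abs, abs_of_nonneg ht0, hba]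
    have hlt : dist a (a + t • (b - a)) < r := by
      rw [hdist]
      calc t * r < 1 * r := mul_lt_mul_of_pos_right ht1 hr
        _ = r := one_mul r
    have hmem : a + t • (b - a) ∈ U := by
      by_contra hx
      have h1 := infDist_le_dist_of_mem (x := a) (show a + t • (b - a) ∈ Uᶜ from hx)
      rw [← hrdef] at h1
      exact absurd (lt_of_le_of_lt h1 hlt) (lt_irrefl r)
    exact hcon _ hmem hlt
  have hbC : b ∈ C := by
    have : b ∈ closure C := by
      rw [Metric.mem_closure_iff]
      intro ε hε
      set δ : ℝ := min (1/2) (ε / (2 * r)) with hδdef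
      have hδ0 : 0 < δ := lt_min (by norm_num) (by positivity)
      have hδh : δ ≤ 1/2 := min_le_left _ _
      refine ⟨a + (1 - δ) • (b - a), hseg _ (by linarith) (by linarith), ?_⟩
      have heq : b - (a + (1 - δ) • (b - a)) = δ • (b - a) := by
        rw [sub_smul, one_smul]; abel
      rw [dist_eq_norm, heq, norm_smul, Real.norm_eq_abs, abs_of_nonneg hδ0.le, hba]
      calc δ * r ≤ ε / (2 * r) * r := mul_le_mul_of_nonneg_right (min_le_right _ _) hr.le
        _ = ε / 2 := by field_simp
        _ < ε := by linarith
    rwa [hC.isClosed.closure_eq] at this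
  exact hbc (hCU hbC)

lemma exhaustion [ProperSpace E] {U : Set E} (hU : IsOpen U) (hne : Uᶜ.Nonempty) :
    ∃ K : ℕ → Set E, (∀ m, IsCompact (K m)) ∧ (∀ m, K m ⊆ U) ∧
      (∀ x ∈ U, ∃ ρ > 0, ∃ m0 : ℕ, closedBall x ρ ∈ 𝓝 x ∧
        ∀ m, m0 ≤ m → closedBall x ρ ⊆ K m) := by
  refine ⟨fun m => closedBall 0 m ∩ {z | ((m : ℝ) + 1)⁻¹ ≤ infDist z Uᶜ}, ?_, ?_, ?_⟩
  · intro m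
    refine IsCompact.of_isClosed_subset (isCompact_closedBall 0 m) ?_ inter_subset_left
    exact IsClosed.inter Metric.isClosed_closedBall (isClosed_le continuous_const (continuous_infDist_pt _))
  · intro m z hz
    by_contra hzU
    have h0 : infDist z Uᶜ = 0 := infDist_zero_of_mem hzU
    have h2 := hz.2
    rw [mem_setOf_eq, h0] at h2
    have h3 : (0:ℝ) < ((m : ℝ) + 1)⁻¹ := by positivity
    linarith
  · intro x hx
    obtain ⟨ε, hε, hball⟩ := Metric.isOpen_iff.mp hU x hx
    set ρ : ℝ := ε / 3 with hρdef
    have hρ : 0 < ρ := by positivity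
    refine ⟨ρ, hρ, max ⌈‖x‖ + ρ⌉₊ ⌈ρ⁻¹⌉₊, closedBall_mem_nhds x hρ, ?_⟩
    intro m hm w hw
    have hm1 : (⌈‖x‖ + ρ⌉₊ : ℝ) ≤ m := by
      exact_mod_cast Nat.cast_le.mpr (le_trans (le_max_left _ _) hm)
    have hm2 : (⌈ρ⁻¹⌉₊ : ℝ) ≤ m := by
      exact_mod_cast Nat.cast_le.mpr (le_trans (le_max_right _ _) hm)
    constructor
    · rw [mem_closedBall, dist_zero_right]
      have h1 : ‖w‖ ≤ ‖x‖ + ρ := by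
        calc ‖w‖ = ‖x + (w - x)‖ := by rw [add_sub_cancel]
          _ ≤ ‖x‖ + ‖w - x‖ := norm_add_le _ _
          _ ≤ ‖x‖ + ρ := by
              have h4 : ‖w - x‖ = dist w x := (dist_eq_norm w x).symm
              rw [h4]
              exact add_le_add le_rfl (mem_closedBall.mp hw)
      exact h1.trans ((Nat.le_ceil _).trans hm1)
    · rw [mem_setOf_eq]
      have hinf : ρ ≤ infDist w Uᶜ := by
        by_contra hcon
        push_neg at hcon
        obtain ⟨u, hu, hc⟩ := (infDist_lt_iff hne).mp hcon
        rw [dist_comm] at hc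
        have h5 : dist u x < ε := by
          have h2 := mem_closedBall.mp hw
          calc dist u x ≤ dist u w + dist w x := dist_triangle _ _ _
            _ < ρ + ρ := add_lt_add_of_lt_of_le hc h2
            _ < ε := by rw [hρdef]; linarith
        exact hu (hball (mem_ball.mpr h5))
      have hle : ((m : ℝ) + 1)⁻¹ ≤ ρ := by
        have h3 : ρ⁻¹ ≤ (m : ℝ) + 1 := ((Nat.le_ceil _).trans hm2).trans (by linarith)
        calc ((m : ℝ) + 1)⁻¹ ≤ (ρ⁻¹)⁻¹ := by
              apply inv_anti₀ (by positivity) h3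
          _ = ρ := inv_inv ρ
      exact hle.trans hinf

lemma listSum_range (f : ℕ → ℝ) (m : ℕ) :
    ((List.range m).map f).sum = ∑ p ∈ Finset.range m, f p := by
  induction m with
  | zero => simp
  | succ m ih => simp [List.range_succ, Finset.sum_range_succ, ih]

end Aux

/- ### Separation lemma -/

lemma sep_lemma {n : ℕ} {l : Fin n → ℕ} {U C : Set (∀ j, Fin (l j) → ℂ)}
    (hU : IsOpen U) (hCU : C ⊆ U) (hCc : IsCompact C)
    {z : ∀ j, Fin (l j) → ℂ} (hzU : z ∈ U) (hz : z ∉ cnHull U C)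
    (ε M : ℝ) (hε : 0 < ε) :
    ∃ (i : Fin n) (g : (∀ j, Fin (l j) → ℂ) → ℂ), DifferentiableOn ℂ g U ∧
      (∀ b ∈ U, ∀ j : Fin n, j ≠ i → ∀ v : Fin (l j) → ℂ,
        fderiv ℂ g b (Pi.single j v) = 0) ∧
      (∀ w ∈ C, ‖g w‖ ≤ ε) ∧ M ≤ ‖g z‖ := by
  simp only [cnHull, mem_setOf_eq, not_and, not_forall] at hz
  obtain ⟨f0, hf0, hgt⟩ := hz hzU
  push_neg at hgt
  set s : ℝ := sSup ((fun w => ‖f0 w‖) '' C) with hsdef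
  have hbdd : BddAbove ((fun w => ‖f0 w‖) '' C) :=
    (hCc.image_of_continuousOn ((hf0.1.continuousOn.mono hCU).norm)).bddAbove
  have hle : ∀ w ∈ C, ‖f0 w‖ ≤ s := fun w hw => le_csSup hbdd ⟨w, hw, rfl⟩
  have hs0 : 0 ≤ s := by
    rcases C.eq_empty_or_nonempty with rfl | ⟨w, hw⟩
    · simp [hsdef, Real.sSup_empty]
    · exact le_trans (norm_nonneg (f0 w)) (hle w hw)
  have hnpos : 0 < n := by
    rcases Nat.eq_zero_or_pos n with h0 | h; swap; · exact h
    exfalso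
    subst h0
    have h1 : f0 z = 0 := Subsingleton.elim _ _
    rw [h1, norm_zero] at hgt
    exact absurd (lt_of_le_of_lt hs0 hgt) (lt_irrefl 0)
  haveI : NeZero n := ⟨hnpos.ne'⟩
  obtain ⟨i, -, hi⟩ := Finset.exists_mem_eq_sup (Finset.univ : Finset (Fin n))
    (Finset.univ_nonempty) (fun i => ‖f0 z i‖₊)
  have hnormi : ‖f0 z‖ = ‖f0 z i‖ := by
    rw [Pi.norm_def, hi]; rfl
  set g0 : (∀ j, Fin (l j) → ℂ) → ℂ := fun w => f0 w i with hg0def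
  have hdg0 : DifferentiableOn ℂ g0 U := fun x hx =>
    (differentiableWithinAt_pi.mp (hf0.1 x hx)) i
  have hle0 : ∀ w ∈ C, ‖g0 w‖ ≤ s := fun w hw =>
    le_trans (norm_le_pi_norm (f0 w) i) (hle w hw)
  have hgz : s < ‖g0 z‖ := by rw [hg0def]; rw [hnormi] at hgt; exact hgt
  set d : ℝ := (s + ‖g0 z‖) / 2 with hddef
  have hd : 0 < d := by
    have := lt_of_le_of_lt hs0 hgz
    rw [hddef]; linarith
  have hsd : s < d := by rw [hddef]; linarith
  have hdz : d < ‖g0 z‖ := by rw [hddef]; linarith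
  have hρ1 : s / d < 1 := (div_lt_one hd).mpr hsd
  have hρ2 : 1 < ‖g0 z‖ / d := (one_lt_div hd).mpr hdz
  have h1 : Tendsto (fun N => (s / d) ^ N) atTop (𝓝 0) :=
    tendsto_pow_atTop_nhds_zero_of_lt_one (by positivity) hρ1
  have h2 : Tendsto (fun N => (‖g0 z‖ / d) ^ N) atTop atTop :=
    tendsto_pow_atTop_atTop_of_one_lt hρ2
  have e1 : ∀ᶠ N in atTop, (s / d) ^ N ≤ ε := h1.eventually_le_const hε
  have e2 : ∀ᶠ N in atTop, M ≤ (‖g0 z‖ / d) ^ N := h2.eventually_ge_atTop M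
  obtain ⟨N, hN1, hN2⟩ := (e1.and e2).exists
  have hdiffg : DifferentiableOn ℂ (fun w => (g0 w * (d : ℂ)⁻¹) ^ N) U := by
    exact DifferentiableOn.pow (hdg0.mul (differentiableOn_const _)) N
  refine ⟨i, fun w => (g0 w * (d : ℂ)⁻¹) ^ N, hdiffg, ?_, ?_, ?_⟩
  · intro b hb j hj v
    have hb0 : DifferentiableAt ℂ g0 b := hdg0.differentiableAt (hU.mem_nhds hb)
    set φ : ℂ → ℂ := fun w => (w * (d : ℂ)⁻¹) ^ N with hφdef
    have hφ : Differentiable ℂ φ := (differentiable_id.mul_const _).pow N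
    have hcomp : fderiv ℂ (fun w => (g0 w * (d : ℂ)⁻¹) ^ N) b
        = (fderiv ℂ φ (g0 b)).comp (fderiv ℂ g0 b) :=
      fderiv_comp b (hφ.differentiableAt) hb0
    rw [hcomp]
    have h0 : fderiv ℂ g0 b (Pi.single j v) = 0 := hf0.2 b hb i j (Ne.symm hj) v
    simp [ContinuousLinearMap.comp_apply, h0]
  · intro w hw
    have hb1 : ‖g0 w * (d : ℂ)⁻¹‖ ≤ s / d := by
      rw [norm_mul, norm_inv, Complex.norm_real, Real.norm_eq_abs, abs_of_pos hd,
        ← div_eq_mul_inv]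
      gcongr
      exact hle0 w hw
    calc ‖(g0 w * (d : ℂ)⁻¹) ^ N‖ = ‖g0 w * (d : ℂ)⁻¹‖ ^ N := norm_pow _ _
      _ ≤ (s / d) ^ N := pow_le_pow_left₀ (norm_nonneg _) hb1 N
      _ ≤ ε := hN1
  · have hb2 : ‖g0 z * (d : ℂ)⁻¹‖ = ‖g0 z‖ / d := by
      rw [norm_mul, norm_inv, Complex.norm_real, Real.norm_eq_abs, abs_of_pos hd,
        ← div_eq_mul_inv]
    calc M ≤ (‖g0 z‖ / d) ^ N := hN2
      _ = ‖g0 z * (d : ℂ)⁻¹‖ ^ N := by rw [hb2]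
      _ = ‖(g0 z * (d : ℂ)⁻¹) ^ N‖ := (norm_pow _ _).symm
/- ### The recursive construction -/

/-- State datum: a point, a scalar function, and a block index. -/
abbrev CTDatum (n : ℕ) (l : Fin n → ℕ) : Type :=
  (∀ j, Fin (l j) → ℂ) × (((∀ j, Fin (l j) → ℂ) → ℂ) × Fin n)

/-- The specification for stage `m` of the construction, given history `s`. -/
def CTSpec {n : ℕ} {l : Fin n → ℕ} (U : Set (∀ j, Fin (l j) → ℂ))
    (a : ℕ → ∀ j, Fin (l j) → ℂ) (K : ℕ → Set (∀ j, Fin (l j) → ℂ))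
    (m : ℕ) (s : List (CTDatum n l)) (t : CTDatum n l) : Prop :=
  t.1 ∈ U ∧ dist (a (Nat.unpair m).1) t.1 < infDist (a (Nat.unpair m).1) Uᶜ ∧
  DifferentiableOn ℂ t.2.1 U ∧
  (∀ b ∈ U, ∀ j : Fin n, j ≠ t.2.2 → ∀ v : Fin (l j) → ℂ,
    fderiv ℂ t.2.1 b (Pi.single j v) = 0) ∧
  (∀ w ∈ K m ∪ {x | x ∈ s.map Prod.fst}, ‖t.2.1 w‖ ≤ (2:ℝ)⁻¹ ^ m) ∧
  ((m : ℝ) + 2 + ((s.map (fun q => ‖q.2.1 t.1‖)).sum) ≤ ‖t.2.1 t.1‖)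

open Classical in
noncomputable def ctPick {n : ℕ} {l : Fin n → ℕ} (U : Set (∀ j, Fin (l j) → ℂ))
    (a : ℕ → ∀ j, Fin (l j) → ℂ) (K : ℕ → Set (∀ j, Fin (l j) → ℂ)) (d : CTDatum n l)
    (m : ℕ) (s : List (CTDatum n l)) : CTDatum n l :=
  if h : ∃ t, CTSpec U a K m s t then h.choose else d

noncomputable def ctHist {n : ℕ} {l : Fin n → ℕ} (U : Set (∀ j, Fin (l j) → ℂ))
    (a : ℕ → ∀ j, Fin (l j) → ℂ) (K : ℕ → Set (∀ j, Fin (l j) → ℂ)) (d : CTDatum n l) :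
    ℕ → List (CTDatum n l) :=
  fun m => Nat.rec [] (fun m ih => ih ++ [ctPick U a K d m ih]) m

noncomputable def ctSeq {n : ℕ} {l : Fin n → ℕ} (U : Set (∀ j, Fin (l j) → ℂ))
    (a : ℕ → ∀ j, Fin (l j) → ℂ) (K : ℕ → Set (∀ j, Fin (l j) → ℂ)) (d : CTDatum n l)
    (m : ℕ) : CTDatum n l :=
  ctPick U a K d m (ctHist U a K d m)

lemma ctHist_succ {n : ℕ} {l : Fin n → ℕ} (U : Set (∀ j, Fin (l j) → ℂ))
    (a : ℕ → ∀ j, Fin (l j) → ℂ) (K : ℕ → Set (∀ j, Fin (l j) → ℂ)) (d : CTDatum n l)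
    (m : ℕ) : ctHist U a K d (m + 1) = ctHist U a K d m ++ [ctSeq U a K d m] := rfl

lemma ctHist_eq {n : ℕ} {l : Fin n → ℕ} (U : Set (∀ j, Fin (l j) → ℂ))
    (a : ℕ → ∀ j, Fin (l j) → ℂ) (K : ℕ → Set (∀ j, Fin (l j) → ℂ)) (d : CTDatum n l)
    (m : ℕ) : ctHist U a K d m = (List.range m).map (ctSeq U a K d) := by
  induction m with
  | zero => rfl
  | succ m ih =>
    rw [ctHist_succ, ih, List.range_succ, List.map_append]
    rfl

lemma ctSpec_exists {n : ℕ} {l : Fin n → ℕ} {U : Set (∀ j, Fin (l j) → ℂ)}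
    (hU : IsOpen U) (hne : Uᶜ.Nonempty) (hconv : IsCnHoloConvex U)
    {a : ℕ → ∀ j, Fin (l j) → ℂ} (ha : ∀ k, a k ∈ U)
    {K : ℕ → Set (∀ j, Fin (l j) → ℂ)} (hKc : ∀ m, IsCompact (K m)) (hKU : ∀ m, K m ⊆ U)
    (m : ℕ) (s : List (CTDatum n l)) (hs : ∀ x ∈ s.map Prod.fst, x ∈ U) :
    ∃ t, CTSpec U a K m s t := by
  set C : Set (∀ j, Fin (l j) → ℂ) := K m ∪ {x | x ∈ s.map Prod.fst} with hCdef
  have hCc : IsCompact C := (hKc m).union ((s.map Prod.fst).finite_toSet.isCompact)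
  have hCU : C ⊆ U := union_subset (hKU m) (fun x hx => hs x hx)
  have hhullc : IsCompact (cnHull U C) := hconv C hCU hCc
  have hhullU : cnHull U C ⊆ U := fun z hz => hz.1
  obtain ⟨z, hzU, hzB, hznot⟩ :=
    ball_escapes hU hne (ha (Nat.unpair m).1) hhullc hhullU
  obtain ⟨i, g, hg1, hg2, hg3, hg4⟩ := sep_lemma hU hCU hCc hzU hznot
    ((2:ℝ)⁻¹ ^ m) ((m : ℝ) + 2 + ((s.map (fun q => ‖q.2.1 z‖)).sum)) (by positivity)
  exact ⟨⟨z, g, i⟩, hzU, hzB, hg1, hg2, hg3, hg4⟩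

lemma ctSpec_all {n : ℕ} {l : Fin n → ℕ} {U : Set (∀ j, Fin (l j) → ℂ)}
    (hU : IsOpen U) (hne : Uᶜ.Nonempty) (hconv : IsCnHoloConvex U)
    {a : ℕ → ∀ j, Fin (l j) → ℂ} (ha : ∀ k, a k ∈ U)
    {K : ℕ → Set (∀ j, Fin (l j) → ℂ)} (hKc : ∀ m, IsCompact (K m)) (hKU : ∀ m, K m ⊆ U)
    (d : CTDatum n l) (m : ℕ) :
    CTSpec U a K m (ctHist U a K d m) (ctSeq U a K d m) := by
  induction m using Nat.strong_induction_on with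
  | _ m ih =>
    have hs : ∀ x ∈ (ctHist U a K d m).map Prod.fst, x ∈ U := by
      intro x hx
      rw [ctHist_eq, List.map_map] at hx
      obtain ⟨p, hp, rfl⟩ := List.mem_map.mp hx
      exact (ih p (List.mem_range.mp hp)).1
    have hex := ctSpec_exists hU hne hconv ha hKc hKU m (ctHist U a K d m) hs
    show CTSpec U a K m _ (ctPick U a K d m _)
    rw [ctPick, dif_pos hex]
    exact hex.choose_spec
/- ### Main theorem -/

set_option maxHeartbeats 1000000

/-- On a `ℂⁿ`-holomorphically convex proper open subset `U`, for any sequence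
`a k` in `U` there is a `ℂⁿ`-holomorphic function unbounded on each of the
balls `B k = {z ∈ U | |a k - z| < dist (a k, Uᶜ)}`. -/
theorem cnHolo_unbounded_on_balls {n : ℕ} {l : Fin n → ℕ}
    (U : Set (∀ j, Fin (l j) → ℂ)) (hU : IsOpen U) (hne : U ≠ Set.univ)
    (hconv : IsCnHoloConvex U)
    (a : ℕ → ∀ j, Fin (l j) → ℂ) (ha : ∀ k, a k ∈ U) :
    ∃ f, CnHolo U f ∧ ∀ k : ℕ,
      ¬ BddAbove ((fun z => ‖f z‖) ''
        {z ∈ U | dist (a k) z < Metric.infDist (a k) Uᶜ}) := by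
  classical
  have hne' : Uᶜ.Nonempty := Set.nonempty_compl.mpr hne
  have hnpos : 0 < n := by
    rcases Nat.eq_zero_or_pos n with h0 | h
    · exfalso
      subst h0
      obtain ⟨u, hu⟩ := hne'
      have : u = a 0 := funext fun j => j.elim0
      exact hu (this ▸ ha 0)
    · exact h
  obtain ⟨K, hKc, hKU, hKloc⟩ := exhaustion hU hne'
  set d : CTDatum n l := ⟨a 0, fun _ => 0, ⟨0, hnpos⟩⟩ with hddef
  have hspec : ∀ m, CTSpec U a K m (ctHist U a K d m) (ctSeq U a K d m) :=
    ctSpec_all hU hne' hconv ha hKc hKU d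
  set zz : ℕ → ∀ j, Fin (l j) → ℂ := fun m => (ctSeq U a K d m).1 with hzzdef
  set hh : ℕ → (∀ j, Fin (l j) → ℂ) → ℂ := fun m => (ctSeq U a K d m).2.1 with hhhdef
  set ii : ℕ → Fin n := fun m => (ctSeq U a K d m).2.2 with hiidef
  have hzU : ∀ m, zz m ∈ U := fun m => (hspec m).1
  have hzB : ∀ m, dist (a (Nat.unpair m).1) (zz m) <
      infDist (a (Nat.unpair m).1) Uᶜ := fun m => (hspec m).2.1
  have hdiffh : ∀ m, DifferentiableOn ℂ (hh m) U := fun m => (hspec m).2.2.1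
  have hpz : ∀ m, ∀ b ∈ U, ∀ j : Fin n, j ≠ ii m → ∀ v : Fin (l j) → ℂ,
      fderiv ℂ (hh m) b (Pi.single j v) = 0 := fun m => (hspec m).2.2.2.1
  have hKbound : ∀ m, ∀ w ∈ K m, ‖hh m w‖ ≤ (2:ℝ)⁻¹ ^ m :=
    fun m w hw => (hspec m).2.2.2.2.1 w (Or.inl hw)
  have hzbound : ∀ m p, p < m → ‖hh m (zz p)‖ ≤ (2:ℝ)⁻¹ ^ m := by
    intro m p hp
    refine (hspec m).2.2.2.2.1 (zz p) (Or.inr ?_)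
    show zz p ∈ {x | x ∈ (ctHist U a K d m).map Prod.fst}
    rw [mem_setOf_eq, ctHist_eq, List.map_map]
    exact List.mem_map.mpr ⟨p, List.mem_range.mpr hp, rfl⟩
  have hgrow : ∀ m : ℕ, (m:ℝ) + 2 + ∑ p ∈ Finset.range m, ‖hh p (zz m)‖ ≤ ‖hh m (zz m)‖ := by
    intro m
    have h1 := (hspec m).2.2.2.2.2
    rw [ctHist_eq, List.map_map] at h1
    have h2 : ((List.range m).map ((fun q : CTDatum n l => ‖q.2.1 (ctSeq U a K d m).1‖) ∘
        ctSeq U a K d)).sum = ∑ p ∈ Finset.range m, ‖hh p (zz m)‖ :=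
      listSum_range _ m
    rw [h2] at h1
    exact h1
  -- the series
  set F : ℕ → (∀ j, Fin (l j) → ℂ) → (Fin n → ℂ) :=
    fun m w => Pi.single (ii m) (hh m w) with hFdef
  have normF : ∀ m w, ‖F m w‖ = ‖hh m w‖ := fun m w => Pi.norm_single _
  have hFdiff : ∀ m, DifferentiableOn ℂ (F m) U := by
    intro m x hx
    rw [differentiableWithinAt_pi]
    intro i
    by_cases hi : i = ii m
    · subst hi
      simp only [hFdef, Pi.single_eq_same]
      exact hdiffh m x hx
    · simp only [hFdef, Pi.single_eq_of_ne hi]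
      exact differentiableWithinAt_const 0
  have hSdiff : ∀ M : ℕ, DifferentiableOn ℂ (fun w => ∑ p ∈ Finset.range M, F p w) U :=
    fun M => DifferentiableOn.fun_sum (fun p _ => hFdiff p)
  have hKball : ∀ x ∈ U, ∃ ρ > 0, ∃ m0 : ℕ, closedBall x ρ ∈ 𝓝 x ∧ closedBall x ρ ⊆ U ∧
      ∀ m, m0 ≤ m → ∀ w ∈ closedBall x ρ, ‖F m w‖ ≤ (2:ℝ)⁻¹ ^ m := by
    intro x hx
    obtain ⟨ρ, hρ, m0, hnh, hsub⟩ := hKloc x hx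
    exact ⟨ρ, hρ, m0, hnh, (hsub m0 le_rfl).trans (hKU m0),
      fun m hm w hw => by rw [normF]; exact hKbound m w (hsub m hm hw)⟩
  have hsum : ∀ x ∈ U, Summable (fun m => F m x) := by
    intro x hx
    obtain ⟨ρ, hρ, m0, hnh, hsubU, hbd⟩ := hKball x hx
    refine Summable.of_norm_bounded_eventually_nat
      (summable_geometric_of_lt_one (by norm_num) (by norm_num) : Summable (fun m : ℕ => (2:ℝ)⁻¹ ^ m)) ?_
    filter_upwards [eventually_ge_atTop m0] with m hm
    exact hbd m hm x (mem_closedBall_self hρ.le)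
  set f : (∀ j, Fin (l j) → ℂ) → (Fin n → ℂ) := fun x => ∑' m, F m x with hfdef
  have hpt : ∀ x ∈ U, Tendsto (fun M => ∑ p ∈ Finset.range M, F p x) atTop (𝓝 (f x)) :=
    fun x hx => (hsum x hx).hasSum.tendsto_sum_nat
  have htlu : TendstoLocallyUniformlyOn
      (fun M w => ∑ p ∈ Finset.range M, F p w) f atTop U := by
    intro u hu x hx
    obtain ⟨ρ, hρ, m0, hnh, hsubU, hbd⟩ := hKball x hx
    have hcont : ∀ m, ∃ B : ℝ, ∀ w ∈ closedBall x ρ, ‖F m w‖ ≤ B := fun m =>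
      (isCompact_closedBall x ρ).exists_bound_of_continuousOn
        ((hFdiff m).continuousOn.mono hsubU)
    choose B hB using hcont
    set u' : ℕ → ℝ := fun m => if m < m0 then B m else (2:ℝ)⁻¹ ^ m with hu'def
    have hsummu' : Summable u' := by
      rw [← summable_nat_add_iff m0]
      have hgeo : Summable (fun m : ℕ => (2:ℝ)⁻¹ ^ m * (2:ℝ)⁻¹ ^ m0) :=
        (summable_geometric_of_lt_one (by norm_num) (by norm_num)).mul_right _
      refine (hgeo.congr (fun m => (pow_add (2:ℝ)⁻¹ m m0).symm)).congr (fun m => ?_)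
      rw [hu'def]
      simp [Nat.not_lt.mpr (Nat.le_add_left m0 m)]
    have hfu : ∀ m w, w ∈ closedBall x ρ → ‖F m w‖ ≤ u' m := by
      intro m w hw
      simp only [hu'def]
      by_cases hm : m < m0
      · rw [if_pos hm]; exact hB m w hw
      · rw [if_neg hm]; exact hbd m (Nat.not_lt.mp hm) w hw
    have htuo := tendstoUniformlyOn_tsum_nat hsummu' hfu
    exact ⟨closedBall x ρ, mem_nhdsWithin_of_mem_nhds hnh, htuo u hu⟩
  have hfdiff : DifferentiableOn ℂ f U := weierstrass hU hSdiff htlu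
  -- the vanishing partial derivatives transfer to the limit
  have hpzero : ∀ b ∈ U, ∀ i j : Fin n, i ≠ j → ∀ v : Fin (l j) → ℂ,
      fderiv ℂ (fun z => f z i) b (Pi.single j v) = 0 := by
    intro b hb i j hij v
    obtain ⟨ε, hε, hball⟩ := Metric.isOpen_iff.mp hU b hb
    set w0 : ∀ j, Fin (l j) → ℂ := Pi.single j v with hw0def
    set t0 : ℝ := ε / (‖w0‖ + 1) with ht0def
    have ht0 : 0 < t0 := by positivity
    have hsegU : ∀ t : ℂ, ‖t‖ < t0 → b + t • w0 ∈ U := by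
      intro t ht
      apply hball
      rw [mem_ball, dist_comm, dist_self_add_right]
      calc ‖t • w0‖ = ‖t‖ * ‖w0‖ := norm_smul t w0
        _ ≤ ‖t‖ * (‖w0‖ + 1) :=
            mul_le_mul_of_nonneg_left (by linarith) (norm_nonneg t)
        _ < t0 * (‖w0‖ + 1) := mul_lt_mul_of_pos_right ht (by positivity)
        _ = ε := by rw [ht0def]; field_simp
    have hconst : ∀ m : ℕ, ii m = i → ∀ t : ℂ, ‖t‖ < t0 →
        hh m (b + t • w0) = hh m b := by
      intro m him t ht
      have hψd : DifferentiableOn ℂ (fun τ : ℂ => hh m (b + τ • w0)) (ball (0:ℂ) t0) := by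
        intro τ hτ
        have hτU : b + τ • w0 ∈ U := hsegU τ (by simpa [mem_ball, dist_zero_right] using hτ)
        have hda : DifferentiableAt ℂ (hh m) (b + τ • w0) :=
          (hdiffh m).differentiableAt (hU.mem_nhds hτU)
        exact ((slice_hasDerivAt w0 τ hda).differentiableAt).differentiableWithinAt
      have hψ0 : ∀ τ ∈ ball (0:ℂ) t0,
          fderivWithin ℂ (fun τ : ℂ => hh m (b + τ • w0)) (ball (0:ℂ) t0) τ = 0 := by
        intro τ hτ
        have hτU : b + τ • w0 ∈ U := hsegU τ (by simpa [mem_ball, dist_zero_right] using hτ)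
        have hda : DifferentiableAt ℂ (hh m) (b + τ • w0) :=
          (hdiffh m).differentiableAt (hU.mem_nhds hτU)
        have hd1 := slice_hasDerivAt w0 τ hda
        have hz : fderiv ℂ (hh m) (b + τ • w0) w0 = 0 := by
          rw [hw0def]
          exact hpz m _ hτU j (him ▸ (Ne.symm hij)) v
        rw [hz] at hd1
        rw [fderivWithin_of_isOpen isOpen_ball hτ, hd1.hasFDerivAt.fderiv]
        ext
        simp
      have hcst := (convex_ball (0:ℂ) t0).is_const_of_fderivWithin_eq_zero hψd hψ0
        (by simpa [mem_ball, dist_zero_right] using ht) (mem_ball_self ht0)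
      simpa using hcst
    have hSconst : ∀ M : ℕ, ∀ t : ℂ, ‖t‖ < t0 →
        (∑ p ∈ Finset.range M, F p (b + t • w0)) i = (∑ p ∈ Finset.range M, F p b) i := by
      intro M t ht
      rw [Finset.sum_apply, Finset.sum_apply]
      apply Finset.sum_congr rfl
      intro p _
      simp only [hFdef]
      by_cases hip : i = ii p
      · rw [hconst p hip.symm t ht]
      · rw [Pi.single_eq_of_ne hip, Pi.single_eq_of_ne hip]
    have hflocconst : ∀ t : ℂ, ‖t‖ < t0 → f (b + t • w0) i = f b i := by
      intro t ht
      have h1 : Tendsto (fun M => (∑ p ∈ Finset.range M, F p (b + t • w0)) i) atTop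
          (𝓝 (f (b + t • w0) i)) :=
        ((continuous_apply i).tendsto (f (b + t • w0))).comp (hpt _ (hsegU t ht))
      have h2 : Tendsto (fun M => (∑ p ∈ Finset.range M, F p b) i) atTop (𝓝 (f b i)) :=
        ((continuous_apply i).tendsto (f b)).comp (hpt b hb)
      have h3 : (fun M => (∑ p ∈ Finset.range M, F p (b + t • w0)) i)
          = fun M => (∑ p ∈ Finset.range M, F p b) i := funext fun M => hSconst M t ht
      rw [h3] at h1
      exact tendsto_nhds_unique h1 h2
    have hfi : DifferentiableAt ℂ f b := hfdiff.differentiableAt (hU.mem_nhds hb)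
    have hgi : DifferentiableAt ℂ (fun z => f z i) b := (differentiableAt_pi.mp hfi) i
    have hder : HasDerivAt (fun t : ℂ => f (b + t • w0) i)
        (fderiv ℂ (fun z => f z i) b w0) 0 := by
      have := slice_hasDerivAt (f := fun z => f z i) w0 0 (by simpa using hgi)
      simpa using this
    have hev : (fun t : ℂ => f (b + t • w0) i) =ᶠ[𝓝 (0:ℂ)] (fun _ => f b i) := by
      filter_upwards [Metric.ball_mem_nhds (0:ℂ) ht0] with t ht
      exact hflocconst t (by simpa [mem_ball, dist_zero_right] using ht)
    have hder2 : HasDerivAt (fun _ : ℂ => f b i) (fderiv ℂ (fun z => f z i) b w0) 0 :=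
      hder.congr_of_eventuallyEq hev.symm
    exact hder2.unique (hasDerivAt_const 0 (f b i))
  -- conclusion: unboundedness on each ball
  refine ⟨f, ⟨hfdiff, hpzero⟩, ?_⟩
  intro k
  rw [not_bddAbove_iff]
  intro c
  set m : ℕ := Nat.pair k ⌈c⌉₊ with hmdef
  have hk : (Nat.unpair m).1 = k := by rw [hmdef, Nat.unpair_pair]
  have hmge : (c:ℝ) ≤ m := by
    refine (Nat.le_ceil c).trans ?_
    exact_mod_cast Nat.right_le_pair k ⌈c⌉₊
  have hzmem : zz m ∈ {z ∈ U | dist (a k) z < infDist (a k) Uᶜ} := by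
    refine ⟨hzU m, ?_⟩
    have := hzB m
    rwa [hk] at this
  have hsumz := hsum (zz m) (hzU m)
  have hsplit : (∑ p ∈ Finset.range (m+1), F p (zz m)) + (∑' p, F (p + (m+1)) (zz m))
      = f (zz m) := hsumz.sum_add_tsum_nat_add (m+1)
  have htail : ‖∑' p : ℕ, F (p + (m+1)) (zz m)‖ ≤ 1 := by
    have hb : ∀ p : ℕ, ‖F (p + (m+1)) (zz m)‖ ≤ (2:ℝ)⁻¹ * (2:ℝ)⁻¹ ^ p := by
      intro p
      rw [normF]
      refine (hzbound _ m (by omega)).trans ?_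
      calc (2:ℝ)⁻¹ ^ (p + (m+1)) = (2:ℝ)⁻¹ ^ p * ((2:ℝ)⁻¹ ^ m * (2:ℝ)⁻¹) := by
            rw [pow_add, pow_succ]
        _ ≤ (2:ℝ)⁻¹ ^ p * (1 * (2:ℝ)⁻¹) := by
            gcongr
            exact pow_le_one₀ (by norm_num) (by norm_num)
        _ = (2:ℝ)⁻¹ * (2:ℝ)⁻¹ ^ p := by ring
    have hgeo : HasSum (fun p : ℕ => (2:ℝ)⁻¹ * (2:ℝ)⁻¹ ^ p) 1 := by
      have h := (hasSum_geometric_of_lt_one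
        (by norm_num : (0:ℝ) ≤ 2⁻¹) (by norm_num : (2:ℝ)⁻¹ < 1)).mul_left (2:ℝ)⁻¹
      exact (show (2:ℝ)⁻¹ * (1 - 2⁻¹)⁻¹ = 1 by norm_num) ▸ h
    exact tsum_of_norm_bounded hgeo hb
  have hhead : (m:ℝ) + 2 ≤ ‖∑ p ∈ Finset.range (m+1), F p (zz m)‖ := by
    rw [Finset.sum_range_succ]
    have h1 : ‖∑ p ∈ Finset.range m, F p (zz m)‖ ≤ ∑ p ∈ Finset.range m, ‖hh p (zz m)‖ := by
      refine (norm_sum_le _ _).trans ?_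
      apply Finset.sum_le_sum
      intro p _
      rw [normF]
    have h2 := hgrow m
    have h3 : ‖hh m (zz m)‖ ≤
        ‖∑ p ∈ Finset.range m, F p (zz m) + F m (zz m)‖ + ‖∑ p ∈ Finset.range m, F p (zz m)‖ := by
      have h4 := norm_sub_le (∑ p ∈ Finset.range m, F p (zz m) + F m (zz m))
        (∑ p ∈ Finset.range m, F p (zz m))
      rw [add_sub_cancel_left, normF] at h4
      exact h4
    linarith
  have h5 : ‖∑ p ∈ Finset.range (m+1), F p (zz m)‖ ≤ ‖f (zz m)‖ + ‖∑' p : ℕ, F (p + (m+1)) (zz m)‖ := by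
    have h6 := norm_sub_le
      ((∑ p ∈ Finset.range (m+1), F p (zz m)) + (∑' p : ℕ, F (p + (m+1)) (zz m)))
      (∑' p : ℕ, F (p + (m+1)) (zz m))
    rw [add_sub_cancel_right, hsplit] at h6
    exact h6
  have hfin : c < ‖f (zz m)‖ := by
    have : (m:ℝ) + 1 ≤ ‖f (zz m)‖ := by linarith
    linarith
  exact ⟨‖f (zz m)‖, ⟨zz m, hzmem, rfl⟩, hfin⟩
end

section
/- Let U_j be nonempty connected open subsets of C^{l_j} for j = 1,...,n, and set U := U_1 × ... × U_n. Then O_{l1,...,ln}(U) = O_{l1}(U_1) × ... × O_{ln}(U_n): a map (f1,...,fn) : U → C^n is C^n-holomorphic if and only if each fi depends only on the variable z_i and equals a holomorphic function of z_i ∈ U_i. -/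
open Set Metric

/-- Constancy on an open preconnected set from vanishing derivative. -/
lemma const_of_hasFDerivAt_zero {E F : Type*} [NormedAddCommGroup E] [NormedSpace ℂ E]
    [NormedAddCommGroup F] [NormedSpace ℂ F]
    {s : Set E} (hs : IsOpen s) (hc : IsPreconnected s) {h : E → F}
    (hd : ∀ x ∈ s, HasFDerivAt h (0 : E →L[ℂ] F) x) :
    ∀ x ∈ s, ∀ y ∈ s, h x = h y := by
  intro x hx y hy
  haveI : PreconnectedSpace s := isPreconnected_iff_preconnectedSpace.mp hc
  have hl : IsLocallyConstant (fun z : s => h z) := by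
    rw [IsLocallyConstant.iff_exists_open]
    rintro ⟨a, ha⟩
    obtain ⟨ε, hε, hb⟩ := Metric.isOpen_iff.mp hs a ha
    refine ⟨Subtype.val ⁻¹' Metric.ball a ε,
      isOpen_ball.preimage continuous_subtype_val, Set.mem_preimage.mpr (mem_ball_self hε), ?_⟩
    rintro ⟨b, hbs⟩ hb'
    have hcv : Convex ℝ (Metric.ball a ε) := convex_ball a ε
    exact hcv.is_const_of_fderivWithin_eq_zero
      (fun z hz => ((hd z (hb hz)).differentiableAt).differentiableWithinAt)
      (fun z hz => by
        rw [fderivWithin_of_isOpen isOpen_ball hz, (hd z (hb hz)).fderiv])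
      hb' (mem_ball_self hε)
  exact hl.apply_eq_of_preconnectedSpace ⟨x, hx⟩ ⟨y, hy⟩

/-- On a product `U = U 0 × ... × U (n-1)` of nonempty connected open sets, a
map is `ℂⁿ`-holomorphic iff each component depends only on its own block
variable, via a holomorphic function on `U j`. -/
theorem cnHolo_pi_iff {n : ℕ} {l : Fin n → ℕ}
    (U : ∀ j, Set (Fin (l j) → ℂ))
    (hUo : ∀ j, IsOpen (U j)) (hUc : ∀ j, IsConnected (U j))
    (f : (∀ j, Fin (l j) → ℂ) → (Fin n → ℂ)) :
    CnHolo (Set.univ.pi U) f ↔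
      ∃ g : ∀ j, (Fin (l j) → ℂ) → ℂ,
        (∀ j, DifferentiableOn ℂ (g j) (U j)) ∧
        ∀ z ∈ Set.univ.pi U, ∀ i, f z i = g i (z i) := by
  have hpiopen : IsOpen (Set.univ.pi U) := isOpen_set_pi finite_univ (fun j _ => hUo j)
  constructor
  · rintro ⟨hdiff, hpar⟩
    choose z₀ hz₀ using fun j => (hUc j).nonempty
    have hz₀pi : z₀ ∈ Set.univ.pi U := fun j _ => hz₀ j
    -- differentiability of each component at points of U
    have hcomp : ∀ a ∈ Set.univ.pi U, ∀ i : Fin n,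
        DifferentiableAt ℂ (fun z => f z i) a := by
      intro a ha i
      have := (hdiff a ha).differentiableAt (hpiopen.mem_nhds ha)
      exact (differentiableAt_pi.mp this) i
    -- Key: changing the j-th coordinate does not change alien components
    have key : ∀ (i j : Fin n), i ≠ j → ∀ z ∈ Set.univ.pi U, ∀ w ∈ U j,
        f (Function.update z j w) i = f z i := by
      intro i j hij z hz w hw
      have hconst := const_of_hasFDerivAt_zero (hUo j) (hUc j).isPreconnected
        (h := fun w => f (Function.update z j w) i) (s := U j) ?_ w hw (z j) (hz j trivial)
      · calc f (Function.update z j w) i = f (Function.update z j (z j)) i := hconst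
          _ = f z i := by rw [Function.update_eq_self]
      · intro x hx
        have hupd : Function.update z j x ∈ Set.univ.pi U := by
          intro k _
          rcases eq_or_ne k j with rfl | hk
          · simpa using hx
          · rw [Function.update_of_ne hk]; exact hz k trivial
        have h1 : HasFDerivAt (fun y => f y i)
            (fderiv ℂ (fun y => f y i) (Function.update z j x)) (Function.update z j x) :=
          (hcomp _ hupd i).hasFDerivAt
        have h2 := h1.comp x (hasFDerivAt_update z x)
        convert h2 using 1
        · rfl
        ext v
        have : (ContinuousLinearMap.pi
            (Pi.single (M := fun k => (Fin (l j) → ℂ) →L[ℂ] (Fin (l k) → ℂ)) j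
              (ContinuousLinearMap.id ℂ (Fin (l j) → ℂ)))) v
            = Pi.single (M := fun k => Fin (l k) → ℂ) j v := by
          ext k m
          rcases eq_or_ne k j with rfl | hk
          · simp
          · simp [Pi.single_eq_of_ne hk]
        simp only [ContinuousLinearMap.comp_apply, this, ContinuousLinearMap.zero_apply]
        exact (hpar _ hupd i j hij v).symm
    -- piecewise replacement by induction on finsets
    have main : ∀ s : Finset (Fin n), ∀ z ∈ Set.univ.pi U, ∀ i ∉ s,
        f (s.piecewise z₀ z) i = f z i := by
      intro s
      induction s using Finset.induction_on with
      | empty => intro z hz i _; simp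
      | @insert j s hjs ih =>
        intro z hz i hi
        have hij : i ≠ j := fun h => hi (h ▸ Finset.mem_insert_self j s)
        have his : i ∉ s := fun h => hi (Finset.mem_insert_of_mem h)
        have hpmem : s.piecewise z₀ z ∈ Set.univ.pi U := by
          intro k _
          by_cases hk : k ∈ s
          · rw [Finset.piecewise_eq_of_mem _ _ _ hk]; exact hz₀ k
          · rw [Finset.piecewise_eq_of_notMem _ _ _ hk]; exact hz k trivial
        rw [Finset.piecewise_insert]
        rw [key i j hij _ hpmem (z₀ j) (hz₀ j)]
        exact ih z hz i his
    refine ⟨fun j w => f (Function.update z₀ j w) j, ?_, ?_⟩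
    · intro j
      intro w hw
      have hupd : Function.update z₀ j w ∈ Set.univ.pi U := by
        intro k _
        rcases eq_or_ne k j with rfl | hk
        · simpa using hw
        · rw [Function.update_of_ne hk]; exact hz₀ k
      have h1 := (hcomp _ hupd j).hasFDerivAt
      exact ((h1.comp w (hasFDerivAt_update z₀ w)).differentiableAt).differentiableWithinAt
    · intro z hz i
      have hs : f ((Finset.univ.erase i).piecewise z₀ z) i = f z i :=
        main (Finset.univ.erase i) z hz i (Finset.notMem_erase i _)
      have hpe : (Finset.univ.erase i).piecewise z₀ z = Function.update z₀ i (z i) := by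
        funext k
        rcases eq_or_ne k i with rfl | hk
        · rw [Finset.piecewise_eq_of_notMem _ _ _ (Finset.notMem_erase k _)]
          simp
        · rw [Finset.piecewise_eq_of_mem _ _ _ (Finset.mem_erase.mpr ⟨hk, Finset.mem_univ k⟩),
            Function.update_of_ne hk]
      rw [← hs, hpe]
  · rintro ⟨g, hg, hfg⟩
    have hgat : ∀ a ∈ Set.univ.pi U, ∀ i : Fin n, DifferentiableAt ℂ (g i) (a i) := by
      intro a ha i
      exact (hg i (a i) (ha i trivial)).differentiableAt ((hUo i).mem_nhds (ha i trivial))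
    have hFat : ∀ a ∈ Set.univ.pi U, ∀ i : Fin n,
        HasFDerivAt (fun z : ∀ j, Fin (l j) → ℂ => g i (z i))
          ((fderiv ℂ (g i) (a i)).comp
            (ContinuousLinearMap.proj (R := ℂ) (φ := fun j => Fin (l j) → ℂ) i)) a := by
      intro a ha i
      exact ((hgat a ha i).hasFDerivAt).comp a
        ((ContinuousLinearMap.proj (R := ℂ) (φ := fun j => Fin (l j) → ℂ) i).hasFDerivAt)
    have hev : ∀ a ∈ Set.univ.pi U, ∀ i : Fin n,
        (fun z => f z i) =ᶠ[nhds a] (fun z => g i (z i)) := by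
      intro a ha i
      filter_upwards [hpiopen.mem_nhds ha] with z hz
      exact hfg z hz i
    constructor
    · intro a ha
      have : DifferentiableAt ℂ f a := by
        have hF : DifferentiableAt ℂ (fun z (i : Fin n) => g i (z i)) a :=
          differentiableAt_pi.mpr (fun i => (hFat a ha i).differentiableAt)
        refine hF.congr_of_eventuallyEq ?_
        filter_upwards [hpiopen.mem_nhds ha] with z hz
        funext i
        exact hfg z hz i
      exact this.differentiableWithinAt
    · intro a ha i j hij v
      rw [(hev a ha i).fderiv_eq, (hFat a ha i).fderiv]
      have : (ContinuousLinearMap.proj (R := ℂ) (φ := fun j => Fin (l j) → ℂ) i)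
          (Pi.single j v) = 0 := by
        simp [Pi.single_eq_of_ne hij]
      simp [this]
end

section
/- Let U_j be nonempty connected open subsets of C^{l_j} and K_j compact subsets of U_j for j = 1,...,n, and set U := U_1 × ... × U_n, K := K_1 × ... × K_n. Then the C^n-holomorphically convex hull of K in U equals the product of the ordinary holomorphically convex hulls: K̂^U_{l1,...,ln} = (K_1)̂^{U_1} × ... × (K_n)̂^{U_n}. -/
open Set Metric

/-- The ordinary holomorphically convex hull of `K` in `U ⊆ ℂ^m`. -/
def holoHull {m : ℕ} (U K : Set (Fin m → ℂ)) : Set (Fin m → ℂ) :=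
  {z ∈ U | ∀ f : (Fin m → ℂ) → ℂ, DifferentiableOn ℂ f U →
    ‖f z‖ ≤ sSup ((fun w => ‖f w‖) '' K)}

theorem constOn_of_hasFDerivAt_zero {E F : Type*} [NormedAddCommGroup E] [NormedSpace ℂ E]
    [NormedAddCommGroup F] [NormedSpace ℂ F] {s : Set E} (hso : IsOpen s)
    (hsc : IsPreconnected s) {f : E → F}
    (hf : ∀ x ∈ s, HasFDerivAt f (0 : E →L[ℂ] F) x) :
    ∀ x ∈ s, ∀ y ∈ s, f x = f y := by
  have loc : ∀ z ∈ s, ∀ᶠ w in nhds z, f w = f z := by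
    intro z hz
    obtain ⟨r, hr, hball⟩ := Metric.isOpen_iff.1 hso z hz
    filter_upwards [Metric.ball_mem_nhds z hr] with w hw
    refine (convex_ball z r).is_const_of_fderivWithin_eq_zero (𝕜 := ℂ) ?_ ?_ hw (mem_ball_self hr)
    · exact fun u hu => ((hf u (hball hu)).differentiableAt).differentiableWithinAt
    · intro u hu
      rw [fderivWithin_of_isOpen isOpen_ball hu, (hf u (hball hu)).fderiv]
  intro x hx y hy
  by_contra hne
  obtain ⟨z, _, hz1, hz2⟩ := hsc {z | ∀ᶠ w in nhds z, f w = f x} {z | ∀ᶠ w in nhds z, f w ≠ f x}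
    isOpen_setOf_eventually_nhds isOpen_setOf_eventually_nhds
    (fun z hz => by
      by_cases h : f z = f x
      · exact Or.inl ((loc z hz).mono fun w hw => hw.trans h)
      · exact Or.inr ((loc z hz).mono fun w hw hc => h (hw.symm.trans hc)))
    ⟨x, hx, loc x hx⟩
    ⟨y, hy, (loc y hy).mono fun w hw hc => hne ((hw.symm.trans hc).symm)⟩
  obtain ⟨w, hw1, hw2⟩ := (hz1.and hz2).exists
  exact hw2 hw1

theorem cnholo_const {n : ℕ} {l : Fin n → ℕ} {U : ∀ j, Set (Fin (l j) → ℂ)}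
    (hUo : ∀ j, IsOpen (U j)) (hUc : ∀ j, IsPreconnected (U j))
    {f : (∀ j, Fin (l j) → ℂ) → (Fin n → ℂ)} (hf : CnHolo (Set.univ.pi U) f)
    (i : Fin n) :
    ∀ a ∈ Set.univ.pi U, ∀ b ∈ Set.univ.pi U, a i = b i → f a i = f b i := by
  classical
  have hUopen : IsOpen (Set.univ.pi U) := isOpen_set_pi Set.finite_univ (fun j _ => hUo j)
  have step : ∀ j, i ≠ j → ∀ y ∈ Set.univ.pi U, ∀ c ∈ U j,
      f (Function.update y j c) i = f y i := by
    intro j hij y hy c hc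
    have hder : ∀ w ∈ U j,
        HasFDerivAt (fun w => f (Function.update y j w) i)
          (0 : (Fin (l j) → ℂ) →L[ℂ] ℂ) w := by
      intro w hw
      have hmem : Function.update y j w ∈ Set.univ.pi U := by
        intro k _
        by_cases hk : k = j
        · subst hk; simpa using hw
        · simpa [Function.update_of_ne hk] using hy k trivial
      have hdf0 : DifferentiableAt ℂ f (Function.update y j w) :=
        hf.1.differentiableAt (hUopen.mem_nhds hmem)
      have hdf : DifferentiableAt ℂ (fun z => f z i) (Function.update y j w) :=
        differentiableAt_pi.1 hdf0 i
      have h1 := hdf.hasFDerivAt.comp w (hasFDerivAt_update y w)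
      refine h1.congr_fderiv ?_
      symm
      apply ContinuousLinearMap.ext
      intro v
      have hsv : (ContinuousLinearMap.pi
          (Pi.single j (ContinuousLinearMap.id ℂ (Fin (l j) → ℂ)))) v = (Pi.single j v : ∀ k, Fin (l k) → ℂ) := by
        funext k
        by_cases hk : k = j
        · subst hk; simp
        · simp [Pi.single_eq_of_ne hk]
      rw [ContinuousLinearMap.comp_apply, hsv, hf.2 _ hmem i j hij v]
      rfl
    have := constOn_of_hasFDerivAt_zero (hUo j) (hUc j) hder c hc (y j) (hy j trivial)
    rw [this, Function.update_eq_self]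
  intro a ha b hb hab
  have main : ∀ s : Finset (Fin n), i ∉ s → f (s.piecewise b a) i = f a i := by
    intro s
    induction s using Finset.induction_on with
    | empty => intro _; rw [Finset.piecewise_empty]
    | @insert j s hj ih =>
      intro hi
      have hij : i ≠ j := fun h => hi (h ▸ Finset.mem_insert_self j s)
      have his : i ∉ s := fun h => hi (Finset.mem_insert_of_mem h)
      have hy : s.piecewise b a ∈ Set.univ.pi U := by
        intro k _
        by_cases hk : k ∈ s
        · rw [Finset.piecewise_eq_of_mem _ _ _ hk]; exact hb k trivial
        · rw [Finset.piecewise_eq_of_notMem _ _ _ hk]; exact ha k trivial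
      rw [Finset.piecewise_insert, step j hij _ hy (b j) (hb j trivial)]
      exact ih his
  have hbp : b = (Finset.univ.erase i).piecewise b a := by
    funext k
    by_cases hk : k = i
    · subst hk
      rw [Finset.piecewise_eq_of_notMem _ _ _ (Finset.notMem_erase k _)]
      exact hab.symm
    · rw [Finset.piecewise_eq_of_mem _ _ _ (Finset.mem_erase.2 ⟨hk, Finset.mem_univ k⟩)]
  rw [hbp]
  exact (main _ (Finset.notMem_erase i _)).symm

/-- For products of nonempty connected open sets and compacts, the
`ℂⁿ`-holomorphically convex hull of the product is the product of the ordinary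
holomorphically convex hulls. -/
theorem cnHull_pi {n : ℕ} {l : Fin n → ℕ}
    (U K : ∀ j, Set (Fin (l j) → ℂ))
    (hUo : ∀ j, IsOpen (U j)) (hUc : ∀ j, IsConnected (U j))
    (hKc : ∀ j, IsCompact (K j)) (hKU : ∀ j, K j ⊆ U j) :
    cnHull (Set.univ.pi U) (Set.univ.pi K) =
      Set.univ.pi (fun j => holoHull (U j) (K j)) := by
  classical
  have hUopen : IsOpen (Set.univ.pi U) := isOpen_set_pi Set.finite_univ (fun j _ => hUo j)
  ext z
  simp only [cnHull, holoHull, Set.mem_setOf_eq, Set.mem_pi, Set.mem_univ, forall_true_left]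
  constructor
  · rintro ⟨hzU, hz⟩ j
    refine ⟨hzU j, ?_⟩
    intro g hg
    set F : (∀ k, Fin (l k) → ℂ) → (Fin n → ℂ) :=
      fun w => Pi.single j (g (w j)) with hFdef
    have hgj : DifferentiableOn ℂ (fun w : ∀ k, Fin (l k) → ℂ => g (w j)) (Set.univ.pi U) := by
      refine hg.comp ?_ (fun w hw => hw j trivial)
      exact (ContinuousLinearMap.proj (R := ℂ) (φ := fun k => Fin (l k) → ℂ)
        j).differentiable.differentiableOn
    have hF : CnHolo (Set.univ.pi U) F := by
      constructor
      · rw [differentiableOn_pi]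
        intro i
        by_cases hij : i = j
        · subst hij
          have : (fun w => F w i) = fun w : ∀ k, Fin (l k) → ℂ => g (w i) := by
            funext w; simp [hFdef]
          rw [this]; exact hgj
        · have : (fun w => F w i) = fun _ : ∀ k, Fin (l k) → ℂ => (0 : ℂ) := by
            funext w; simp [hFdef, Pi.single_eq_of_ne hij]
          rw [this]; exact differentiableOn_const 0
      · intro a ha i k hik v
        by_cases hij : i = j
        · subst hij
          have hFi : (fun z => F z i) = fun w : ∀ k, Fin (l k) → ℂ => g (w i) := by
            funext w; simp [hFdef]
          rw [hFi]
          have hga : DifferentiableAt ℂ g (a i) :=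
            hg.differentiableAt ((hUo i).mem_nhds (ha i trivial))
          have hcomp : HasFDerivAt (fun w : ∀ k, Fin (l k) → ℂ => g (w i))
              ((fderiv ℂ g (a i)).comp
                (ContinuousLinearMap.proj (R := ℂ) (φ := fun k => Fin (l k) → ℂ) i)) a := by
            exact hga.hasFDerivAt.comp a
              (ContinuousLinearMap.proj (R := ℂ) (φ := fun k => Fin (l k) → ℂ) i).hasFDerivAt
          rw [hcomp.fderiv, ContinuousLinearMap.comp_apply, ContinuousLinearMap.proj_apply,
            Pi.single_eq_of_ne hik, map_zero]
        · have hFi : (fun z => F z i) = fun _ : ∀ k, Fin (l k) → ℂ => (0 : ℂ) := by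
            funext w; simp [hFdef, Pi.single_eq_of_ne hij]
          rw [hFi, fderiv_fun_const]
          rfl
    have h1 := hz F hF
    have hnorm : ∀ w : ∀ k, Fin (l k) → ℂ, ‖F w‖ = ‖g (w j)‖ := by
      intro w; rw [hFdef]; exact Pi.norm_single _
    have himg : (fun w => ‖F w‖) '' Set.univ.pi K ⊆ (fun w => ‖g w‖) '' K j := by
      rintro _ ⟨w, hw, rfl⟩
      exact ⟨w j, hw j trivial, (hnorm w).symm⟩
    have hbdd : BddAbove ((fun w => ‖g w‖) '' K j) :=
      ((hKc j).image_of_continuousOn ((hg.continuousOn.mono (hKU j)).norm)).bddAbove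
    have h2 : sSup ((fun w => ‖F w‖) '' Set.univ.pi K) ≤ sSup ((fun w => ‖g w‖) '' K j) := by
      rcases Set.eq_empty_or_nonempty ((fun w => ‖F w‖) '' Set.univ.pi K) with hA | hA
      · rw [hA, Real.sSup_empty]
        apply Real.sSup_nonneg
        rintro _ ⟨w, _, rfl⟩; positivity
      · exact csSup_le_csSup hbdd hA himg
    calc ‖g (z j)‖ = ‖F z‖ := (hnorm z).symm
      _ ≤ _ := h1
      _ ≤ _ := h2
  · intro hz
    have hzU : z ∈ Set.univ.pi U := fun j _ => (hz j).1
    refine ⟨fun j => (hz j).1, ?_⟩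
    intro f hf
    by_cases hK : ∀ j, (K j).Nonempty
    · choose k₀ hk₀ using hK
      have hk₀pi : k₀ ∈ Set.univ.pi K := fun j _ => hk₀ j
      set M := sSup ((fun w => ‖f w‖) '' Set.univ.pi K) with hM
      have hKpi : IsCompact (Set.univ.pi K) := isCompact_univ_pi hKc
      have hKUpi : Set.univ.pi K ⊆ Set.univ.pi U := fun w hw j _ => hKU j (hw j trivial)
      have hbdd : BddAbove ((fun w => ‖f w‖) '' Set.univ.pi K) :=
        (hKpi.image_of_continuousOn ((hf.1.continuousOn.mono hKUpi).norm)).bddAbove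
      have hMle : ∀ w ∈ Set.univ.pi K, ‖f w‖ ≤ M := fun w hw => le_csSup hbdd ⟨w, hw, rfl⟩
      have hM0 : 0 ≤ M := le_trans (norm_nonneg _) (hMle k₀ hk₀pi)
      rw [pi_norm_le_iff_of_nonneg hM0]
      intro i
      have hupdU : ∀ w ∈ U i, Function.update k₀ i w ∈ Set.univ.pi U := by
        intro w hw k _
        by_cases hk : k = i
        · subst hk; simpa using hw
        · simpa [Function.update_of_ne hk] using hKU k (hk₀ k)
      set g : (Fin (l i) → ℂ) → ℂ := fun w => f (Function.update k₀ i w) i with hgdef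
      have hgdiff : DifferentiableOn ℂ g (U i) := by
        intro w hw
        have hdf0 : DifferentiableAt ℂ f (Function.update k₀ i w) :=
          hf.1.differentiableAt (hUopen.mem_nhds (hupdU w hw))
        have hdf : DifferentiableAt ℂ (fun z => f z i) (Function.update k₀ i w) :=
          differentiableAt_pi.1 hdf0 i
        exact (hdf.comp w (hasFDerivAt_update k₀ w).differentiableAt).differentiableWithinAt
      have key := cnholo_const hUo (fun j => (hUc j).isPreconnected) hf i
      have e1 : f z i = g (z i) := by
        refine key z hzU (Function.update k₀ i (z i))
          (hupdU (z i) ((hz i).1)) ?_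
        rw [Function.update_self]
      have e2 := (hz i).2 g hgdiff
      have hupdK : ∀ w ∈ K i, Function.update k₀ i w ∈ Set.univ.pi K := by
        intro w hw k _
        by_cases hk : k = i
        · subst hk; simpa using hw
        · simpa [Function.update_of_ne hk] using hk₀ k
      have e3 : sSup ((fun w => ‖g w‖) '' K i) ≤ M := by
        apply csSup_le ((Set.Nonempty.image _ ⟨k₀ i, hk₀ i⟩))
        rintro _ ⟨w, hw, rfl⟩
        calc ‖g w‖ = ‖f (Function.update k₀ i w) i‖ := rfl
          _ ≤ ‖f (Function.update k₀ i w)‖ := norm_le_pi_norm _ i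
          _ ≤ M := hMle _ (hupdK w hw)
      rw [e1]
      exact le_trans e2 e3
    · push_neg at hK
      obtain ⟨j, hj⟩ := hK
      have h1 := (hz j).2 (fun _ => 1) (differentiableOn_const 1)
      rw [hj] at h1
      simp [Real.sSup_empty] at h1
      exact absurd h1 (by norm_num)
end

section
/- Let U_j be nonempty connected open subsets of C^{l_j} for j = 1,...,n, and U := U_1 × ... × U_n. Then U is C^n-holomorphically convex if and only if each U_j is holomorphically convex. -/
open Set Metric Filter Topology

/-- `U ⊆ ℂ^m` is holomorphically convex. -/
def IsHoloConvex {m : ℕ} (U : Set (Fin m → ℂ)) : Prop :=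
  ∀ K ⊆ U, IsCompact K → IsCompact (holoHull U K)


/-- A differentiable function with vanishing derivative on an open preconnected set
is constant there. -/
lemma const_of_fderiv_zero' {m : ℕ} {U : Set (Fin m → ℂ)} (hUo : IsOpen U)
    (hUp : IsPreconnected U) {f : (Fin m → ℂ) → ℂ}
    (hf : DifferentiableOn ℂ f U) (hd : ∀ x ∈ U, fderiv ℂ f x = 0) :
    ∀ x ∈ U, ∀ y ∈ U, f x = f y := by
  intro x hx y hy
  have hSopen : IsOpen {z | z ∈ U ∧ f z = f x} := by
    rw [isOpen_iff_mem_nhds]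
    intro z ⟨hzU, hzf⟩
    rcases Metric.isOpen_iff.1 hUo z hzU with ⟨r, hr, hball⟩
    have hconst : ∀ w ∈ ball z r, f w = f z := by
      intro w hw
      refine (convex_ball z r).is_const_of_fderivWithin_eq_zero
        (hf.mono hball) (fun u hu => ?_) hw (mem_ball_self hr)
      rw [fderivWithin_of_isOpen isOpen_ball hu]
      exact hd u (hball hu)
    have : ball z r ⊆ {w | w ∈ U ∧ f w = f x} := fun w hw =>
      ⟨hball hw, (hconst w hw).trans hzf⟩
    exact Filter.mem_of_superset (ball_mem_nhds z hr) this
  have hTopen : IsOpen {z | z ∈ U ∧ f z ≠ f x} := by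
    have h1 : ContinuousOn f U := hf.continuousOn
    have h2 := h1.isOpen_inter_preimage hUo (isOpen_compl_singleton (x := f x))
    exact h2
  by_contra hne
  rcases hUp {z | z ∈ U ∧ f z = f x} {z | z ∈ U ∧ f z ≠ f x} hSopen hTopen
      (fun z hz => by by_cases h : f z = f x; exacts [Or.inl ⟨hz, h⟩, Or.inr ⟨hz, h⟩])
      ⟨x, hx, hx, rfl⟩ ⟨y, hy, hy, fun h => hne h.symm⟩ with ⟨z, _, ⟨_, h1⟩, _, h2⟩
  exact h2 h1

/-- A set that is closed relative to `V`, contained in a compact `C ⊆ V`, is compact. -/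
lemma isCompact_of_relClosed {X : Type*} [TopologicalSpace X] {S C V : Set X}
    (hC : IsCompact C) (hCV : C ⊆ V) (hS : S ⊆ C)
    (hcl : closure S ∩ V ⊆ S) : IsCompact S := by
  have hEq : S = closure S ∩ C :=
    subset_antisymm (subset_inter subset_closure hS)
      (fun x hx => hcl ⟨hx.1, hCV hx.2⟩)
  rw [hEq]
  exact hC.inter_left isClosed_closure

/-- A "hull" cut out in `U` by norm inequalities for functions continuous on `U`
is closed relative to `U`. -/
lemma relClosed_hull {E F : Type*} [NormedAddCommGroup E] [NormedAddCommGroup F]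
    {U : Set E} {ι : Sort*} {fs : ι → E → F} {c : ι → ℝ}
    (hf : ∀ i, ContinuousOn (fs i) U) :
    closure {z | z ∈ U ∧ ∀ i, ‖fs i z‖ ≤ c i} ∩ U ⊆
      {z | z ∈ U ∧ ∀ i, ‖fs i z‖ ≤ c i} := by
  rintro z ⟨hzc, hzU⟩
  refine ⟨hzU, fun i => ?_⟩
  set S := {z | z ∈ U ∧ ∀ i, ‖fs i z‖ ≤ c i} with hSdef
  haveI hne : (𝓝[S] z).NeBot := mem_closure_iff_nhdsWithin_neBot.1 hzc
  have hsub : S ⊆ U := fun w hw => hw.1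
  have ht : Filter.Tendsto (fun w => ‖fs i w‖) (𝓝[S] z) (𝓝 ‖fs i z‖) :=
    ((hf i z hzU).mono hsub).norm
  refine le_of_tendsto ht ?_
  filter_upwards [self_mem_nhdsWithin] with w hw
  exact hw.2 i

/-- Norm of a "single coordinate" vector in the sup norm. -/
lemma norm_ite_single {n : ℕ} (j : Fin n) (c : ℂ) :
    ‖(fun i => if i = j then c else 0 : Fin n → ℂ)‖ = ‖c‖ := by
  have h : (fun i => if i = j then c else 0 : Fin n → ℂ) = Pi.single j c := by
    funext i
    simp [Pi.single_apply]
  rw [h, Pi.norm_single]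

/-- A holomorphic function of the `j`-th block alone, put in the `j`-th component,
is `ℂⁿ`-holomorphic. -/
lemma cnHolo_single {n : ℕ} {l : Fin n → ℕ} {U : ∀ j, Set (Fin (l j) → ℂ)}
    (hUo : ∀ j, IsOpen (U j)) (j : Fin n) {g : (Fin (l j) → ℂ) → ℂ}
    (hg : DifferentiableOn ℂ g (U j)) :
    CnHolo (Set.univ.pi U) (fun w i => if i = j then g (w j) else 0) := by
  have hmaps : MapsTo (fun w : ∀ k, Fin (l k) → ℂ => w j) (Set.univ.pi U) (U j) :=
    fun w hw => hw j trivial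
  constructor
  · rw [differentiableOn_pi]
    intro i
    by_cases hij : i = j
    · subst hij
      have heq : (fun w : ∀ k, Fin (l k) → ℂ =>
          (fun i' => if i' = i then g (w i) else 0 : Fin n → ℂ) i) =
          fun w => g (w i) := by
        funext w; simp
      rw [heq]
      exact hg.comp ((ContinuousLinearMap.proj (R := ℂ)
        (φ := fun k => Fin (l k) → ℂ) i).differentiable.differentiableOn) hmaps
    · have heq : (fun w : ∀ k, Fin (l k) → ℂ =>
          (fun i' => if i' = j then g (w j) else 0 : Fin n → ℂ) i) =
          fun _ => (0 : ℂ) := by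
        funext w; simp [hij]
      rw [heq]
      exact differentiableOn_const 0
  · intro a ha i k hik v
    by_cases hij : i = j
    · subst hij
      have hk : k ≠ i := fun h => hik h.symm
      have hga : DifferentiableAt ℂ g (a i) :=
        hg.differentiableAt ((hUo i).mem_nhds (ha i trivial))
      have hcomp : HasFDerivAt (fun w : ∀ k, Fin (l k) → ℂ => g (w i))
          ((fderiv ℂ g (a i)).comp (ContinuousLinearMap.proj i)) a :=
        hga.hasFDerivAt.comp a (ContinuousLinearMap.proj (R := ℂ)
          (φ := fun k => Fin (l k) → ℂ) i).hasFDerivAt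
      have heq : (fun w : ∀ k, Fin (l k) → ℂ =>
          (fun i' => if i' = i then g (w i) else 0 : Fin n → ℂ) i) =
          fun w => g (w i) := by
        funext w; simp
      rw [heq, hcomp.fderiv]
      have : (Pi.single k v : ∀ k', Fin (l k') → ℂ) i = 0 := by
        rw [Pi.single_eq_of_ne hik]
      simp [ContinuousLinearMap.comp_apply, ContinuousLinearMap.proj_apply, this]
    · have heq : (fun w : ∀ k, Fin (l k) → ℂ =>
          (fun i' => if i' = j then g (w j) else 0 : Fin n → ℂ) i) =
          fun _ => (0 : ℂ) := by
        funext w; simp [hij]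
      rw [heq, fderiv_fun_const]
      rfl

/-- A product of nonempty connected open sets is `ℂⁿ`-holomorphically convex
iff each factor is holomorphically convex. -/
theorem isCnHoloConvex_pi_iff {n : ℕ} {l : Fin n → ℕ}
    (U : ∀ j, Set (Fin (l j) → ℂ))
    (hUo : ∀ j, IsOpen (U j)) (hUc : ∀ j, IsConnected (U j)) :
    IsCnHoloConvex (Set.univ.pi U) ↔ ∀ j, IsHoloConvex (U j) := by
  have hUopen : IsOpen (Set.univ.pi U) := isOpen_set_pi finite_univ fun j _ => hUo j
  constructor
  · -- forward direction
    intro hconv j Kj hKjU hKjc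
    choose a ha using fun k => (hUc k).nonempty
    have haU : a ∈ Set.univ.pi U := fun k _ => ha k
    set e : (Fin (l j) → ℂ) → (∀ k, Fin (l k) → ℂ) := fun z => Function.update a j z
      with he
    have heDiff : Differentiable ℂ e := fun z => (hasFDerivAt_update a z).differentiableAt
    have heCont : Continuous e := heDiff.continuous
    have heU : ∀ z ∈ U j, e z ∈ Set.univ.pi U := by
      intro z hz k _
      by_cases hk : k = j
      · subst hk; simpa [he] using hz
      · simpa [he, Function.update_of_ne hk] using ha k
    have hej : ∀ z, e z j = z := fun z => Function.update_self j z a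
    -- closed embedding
    have heEmb : Topology.IsClosedEmbedding e := by
      refine ⟨Function.LeftInverse.isEmbedding (g := e)
        (f := fun w : ∀ k, Fin (l k) → ℂ => w j) hej (continuous_apply j) heCont, ?_⟩
      have hrange : range e = ⋂ k, ⋂ _ : k ≠ j, {w : ∀ k', Fin (l k') → ℂ | w k = a k} := by
        ext w
        simp only [mem_range, mem_iInter, mem_setOf_eq]
        constructor
        · rintro ⟨z, rfl⟩ k hk
          simp [he, Function.update_of_ne hk]
        · intro h
          refine ⟨w j, ?_⟩
          funext k
          by_cases hk : k = j
          · subst hk; simp [he]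
          · simp [he, Function.update_of_ne hk, h k hk]
      rw [hrange]
      exact isClosed_iInter fun k => isClosed_iInter fun hk =>
        isClosed_eq (continuous_apply k) continuous_const
    have hKc : IsCompact (e '' Kj) := hKjc.image heCont
    have hKU : e '' Kj ⊆ Set.univ.pi U := by
      rintro _ ⟨w, hw, rfl⟩; exact heU w (hKjU hw)
    have hhullC : IsCompact (cnHull (Set.univ.pi U) (e '' Kj)) := hconv _ hKU hKc
    rcases Kj.eq_empty_or_nonempty with rfl | ⟨w₀, hw₀⟩
    · -- empty compact set: hull is empty
      have hempty : holoHull (U j) (∅ : Set (Fin (l j) → ℂ)) = ∅ := by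
        ext z
        simp only [holoHull, mem_setOf_eq, mem_empty_iff_false, iff_false, not_and]
        intro hz h
        have := h (fun _ => 1) (differentiableOn_const 1)
        simp only [image_empty, Real.sSup_empty] at this
        norm_num at this
      rw [hempty]
      exact isCompact_empty
    · -- main case
      have hsub : holoHull (U j) Kj ⊆ e ⁻¹' cnHull (Set.univ.pi U) (e '' Kj) := by
        rintro z ⟨hzU, hzf⟩
        refine ⟨heU z hzU, ?_⟩
        rintro f ⟨hfd, hfl⟩
        have hfc : ContinuousOn (fun w => ‖f w‖) (e '' Kj) :=
          (hfd.continuousOn.mono hKU).norm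
        have hbdd : BddAbove ((fun w => ‖f w‖) '' (e '' Kj)) :=
          (hKc.image_of_continuousOn hfc).bddAbove
        have hnn : (0 : ℝ) ≤ sSup ((fun w => ‖f w‖) '' (e '' Kj)) :=
          le_trans (norm_nonneg (f (e w₀)))
            (le_csSup hbdd ⟨e w₀, mem_image_of_mem _ hw₀, rfl⟩)
        rw [pi_norm_le_iff_of_nonneg hnn]
        intro i
        have hcompDiff : DifferentiableOn ℂ (fun z' => f (e z') i) (U j) := by
          have h1 : DifferentiableOn ℂ (fun w => f w i) (Set.univ.pi U) :=
            differentiableOn_pi.1 hfd i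
          exact h1.comp heDiff.differentiableOn (fun z' hz' => heU z' hz')
        by_cases hij : i = j
        · subst hij
          have hle := hzf _ hcompDiff
          refine hle.trans (Real.sSup_le ?_ hnn)
          rintro x ⟨w, hw, rfl⟩
          calc ‖f (e w) i‖ ≤ ‖f (e w)‖ := norm_le_pi_norm _ i
            _ ≤ _ := le_csSup hbdd ⟨e w, mem_image_of_mem _ hw, rfl⟩
        · -- constant in the j-th block
          have hderiv : ∀ x ∈ U j, fderiv ℂ (fun z' => f (e z') i) x = 0 := by
            intro x hx
            have hfa : DifferentiableAt ℂ (fun w => f w i) (e x) :=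
              (differentiableOn_pi.1 hfd i).differentiableAt
                (hUopen.mem_nhds (heU x hx))
            have hcomp : HasFDerivAt (fun z' => f (e z') i)
                ((fderiv ℂ (fun w => f w i) (e x)).comp
                  (ContinuousLinearMap.pi (Pi.single j (ContinuousLinearMap.id ℂ _)))) x :=
              hfa.hasFDerivAt.comp x (hasFDerivAt_update a x)
            rw [hcomp.fderiv]
            ext v
            have hLv : (ContinuousLinearMap.pi
                (Pi.single j (ContinuousLinearMap.id ℂ (Fin (l j) → ℂ)))) v
                = (Pi.single j v : ∀ k, Fin (l k) → ℂ) := by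
              funext k
              by_cases hk : k = j
              · subst hk
                simp [ContinuousLinearMap.pi_apply]
              · simp [ContinuousLinearMap.pi_apply, Pi.single_eq_of_ne hk]
            simp only [ContinuousLinearMap.comp_apply, hLv, ContinuousLinearMap.zero_apply]
            exact hfl (e x) (heU x hx) i j hij v
          have hconst := const_of_fderiv_zero' (hUo j) (hUc j).isPreconnected
            hcompDiff hderiv z hzU w₀ (hKjU hw₀)
          calc ‖f (e z) i‖ = ‖f (e w₀) i‖ := by rw [hconst]
            _ ≤ ‖f (e w₀)‖ := norm_le_pi_norm _ i
            _ ≤ _ := le_csSup hbdd ⟨e w₀, mem_image_of_mem _ hw₀, rfl⟩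
      have hpre : IsCompact (e ⁻¹' cnHull (Set.univ.pi U) (e '' Kj)) :=
        heEmb.isCompact_preimage hhullC
      have hpreU : e ⁻¹' cnHull (Set.univ.pi U) (e '' Kj) ⊆ U j := by
        intro x hx
        have : e x ∈ Set.univ.pi U := hx.1
        have := this j trivial
        rwa [hej] at this
      -- rewrite hull via an indexed family to use relClosed_hull
      have hhull_eq : holoHull (U j) Kj =
          {z | z ∈ U j ∧ ∀ i : {f : (Fin (l j) → ℂ) → ℂ // DifferentiableOn ℂ f (U j)},
            ‖i.1 z‖ ≤ sSup ((fun w => ‖i.1 w‖) '' Kj)} := by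
        ext z
        simp only [holoHull, mem_setOf_eq, Subtype.forall]
      refine isCompact_of_relClosed hpre hpreU hsub ?_
      rw [hhull_eq]
      exact relClosed_hull fun i => i.2.continuousOn
  · -- backward direction
    intro hcv K hKU hK
    set Kp : ∀ j, Set (Fin (l j) → ℂ) := fun j => (fun w : ∀ k, Fin (l k) → ℂ => w j) '' K
      with hKp
    have hKpU : ∀ j, Kp j ⊆ U j := by
      rintro j _ ⟨w, hw, rfl⟩
      exact hKU hw j trivial
    have hKpc : ∀ j, IsCompact (Kp j) := fun j => hK.image (continuous_apply j)
    have hHc : ∀ j, IsCompact (holoHull (U j) (Kp j)) := fun j => hcv j _ (hKpU j) (hKpc j)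
    have hC : IsCompact (Set.univ.pi fun j => holoHull (U j) (Kp j)) :=
      isCompact_univ_pi hHc
    have hCV : (Set.univ.pi fun j => holoHull (U j) (Kp j)) ⊆ Set.univ.pi U :=
      pi_mono fun j _ => fun z hz => hz.1
    have hsub : cnHull (Set.univ.pi U) K ⊆
        Set.univ.pi fun j => holoHull (U j) (Kp j) := by
      rintro z ⟨hzU, hzf⟩ j _
      refine ⟨hzU j trivial, ?_⟩
      intro g hg
      have hcn := cnHolo_single hUo j hg
      have hle := hzf _ hcn
      have h1 : ‖(fun i => if i = j then g (z j) else 0 : Fin n → ℂ)‖ = ‖g (z j)‖ :=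
        norm_ite_single j (g (z j))
      have h2 : (fun w : ∀ k, Fin (l k) → ℂ =>
          ‖(fun i => if i = j then g (w j) else 0 : Fin n → ℂ)‖) =
          fun w => ‖g (w j)‖ := by
        funext w; exact norm_ite_single j (g (w j))
      rw [h1, h2] at hle
      have h3 : (fun w => ‖g w‖) '' Kp j = (fun w : ∀ k, Fin (l k) → ℂ => ‖g (w j)‖) '' K := by
        rw [hKp]
        exact image_image _ _ _
      rw [h3]
      exact hle
    have hhull_eq : cnHull (Set.univ.pi U) K =
        {z | z ∈ Set.univ.pi U ∧
          ∀ i : {f : (∀ k, Fin (l k) → ℂ) → (Fin n → ℂ) // CnHolo (Set.univ.pi U) f},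
            ‖i.1 z‖ ≤ sSup ((fun w => ‖i.1 w‖) '' K)} := by
      ext z
      simp only [cnHull, mem_setOf_eq, Subtype.forall]
    refine isCompact_of_relClosed hC hCV hsub ?_
    rw [hhull_eq]
    exact relClosed_hull fun i => i.2.1.continuousOn
end

section
/- Let U be a convex open subset of C^{l1}×...×C^{ln} and let f ∈ O_{l1,...,ln}(U). Then there exists g ∈ O_{l1,...,ln}(π1(U) × π2(U) × ... × πn(U)) such that f = g restricted to U. (Here U ⊆ π1(U)×...×πn(U).) -/
open Set Metric

/-- On a convex open set, the `i`-th component of a `ℂⁿ`-holomorphic function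
depends only on the `i`-th coordinate block. -/
lemma cnHolo_key {n : ℕ} {l : Fin n → ℕ}
    (U : Set (∀ j, Fin (l j) → ℂ)) (hU : IsOpen U) (hconv : Convex ℝ U)
    (f : (∀ j, Fin (l j) → ℂ) → (Fin n → ℂ)) (hf : CnHolo U f)
    (i : Fin n) {u u' : ∀ j, Fin (l j) → ℂ} (hu : u ∈ U) (hu' : u' ∈ U)
    (hi : u i = u' i) : f u i = f u' i := by
  set d : ∀ j, Fin (l j) → ℂ := u' - u with hd
  set γ : ℝ → (∀ j, Fin (l j) → ℂ) := fun t => u + t • d with hγ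
  set V : Set ℝ := γ ⁻¹' U with hV
  have hγc : Continuous γ := by continuity
  have hVopen : IsOpen V := hγc.isOpen_preimage U hU
  have hVconv : Convex ℝ V := by
    intro x hx y hy a b ha hb hab
    have : γ (a * x + b * y) = a • γ x + b • γ y := by
      simp only [hγ]
      rw [smul_add, smul_add, smul_smul, smul_smul, add_add_add_comm,
        ← add_smul, ← add_smul, hab, one_smul]
    show γ (a • x + b • y) ∈ U
    simp only [smul_eq_mul, this]
    exact hconv hx hy ha hb hab
  -- directional derivative is zero
  have hzero : ∀ t ∈ V, HasDerivAt (fun s => f (γ s) i) 0 t := by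
    intro t ht
    have haU : γ t ∈ U := ht
    have hfa : DifferentiableAt ℂ f (γ t) := hf.1.differentiableAt (hU.mem_nhds haU)
    have hfi : DifferentiableAt ℂ (fun z => f z i) (γ t) := differentiableAt_pi.mp hfa i
    have hγd : HasDerivAt γ d t := by
      simpa [hγ] using ((hasDerivAt_id t).smul_const d).const_add u
    set F := fderiv ℂ (fun z => f z i) (γ t) with hF
    have hcomp : HasDerivAt (fun s => f (γ s) i) ((F.restrictScalars ℝ) d) t :=
      (hfi.hasFDerivAt.restrictScalars ℝ).comp_hasDerivAt t hγd
    have hFd : F d = 0 := by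
      have hsum : d = ∑ j, Pi.single j (d j) := (Finset.univ_sum_single d).symm
      rw [hsum, map_sum]
      refine Finset.sum_eq_zero fun j _ => ?_
      by_cases hji : i = j
      · subst hji
        have : d i = 0 := by simp [hd, hi]
        simp [this]
      · exact hf.2 (γ t) haU i j hji (d j)
    simpa [hFd] using hcomp
  have hdiff : DifferentiableOn ℝ (fun s => f (γ s) i) V := fun t ht =>
    ((hzero t ht).differentiableAt).differentiableWithinAt
  have h0 : (0 : ℝ) ∈ V := by simp [hV, hγ, hu]
  have h1 : (1 : ℝ) ∈ V := by
    have : γ 1 = u' := by simp [hγ, hd]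
    simp [hV, this, hu']
  have hconst := hVconv.is_const_of_fderivWithin_eq_zero hdiff
    (fun x hx => by
      rw [fderivWithin_of_isOpen hVopen hx, ((hzero x hx).hasFDerivAt).fderiv]
      ext
      simp) h0 h1
  have e0 : γ 0 = u := by simp [hγ]
  have e1 : γ 1 = u' := by simp [hγ, hd]
  rw [e0, e1] at hconst
  exact hconst

/-- Every `ℂⁿ`-holomorphic function on a convex open set `U` extends to a
`ℂⁿ`-holomorphic function on the product of the block projections of `U`. -/
theorem cnHolo_extend_of_convex {n : ℕ} {l : Fin n → ℕ}
    (U : Set (∀ j, Fin (l j) → ℂ)) (hU : IsOpen U) (hconv : Convex ℝ U)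
    (f : (∀ j, Fin (l j) → ℂ) → (Fin n → ℂ)) (hf : CnHolo U f) :
    ∃ g, CnHolo (Set.univ.pi (fun j => (fun z => z j) '' U)) g ∧
      Set.EqOn f g U := by
  classical
  set S := Set.univ.pi (fun j => (fun z : ∀ j, Fin (l j) → ℂ => z j) '' U) with hS
  set g : (∀ j, Fin (l j) → ℂ) → (Fin n → ℂ) := fun z i =>
    if h : ∃ u, u ∈ U ∧ u i = z i then f h.choose i else 0 with hg
  have gspec : ∀ (i : Fin n) (z u : ∀ j, Fin (l j) → ℂ), u ∈ U → u i = z i →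
      g z i = f u i := by
    intro i z u hu huz
    have hex : ∃ v, v ∈ U ∧ v i = z i := ⟨u, hu, huz⟩
    simp only [hg, dif_pos hex]
    exact cnHolo_key U hU hconv f hf i hex.choose_spec.1 hu
      (hex.choose_spec.2.trans huz.symm)
  -- local representation of g near a point of S
  have hloc : ∀ z ∈ S, ∀ i : Fin n,
      ∃ w ∈ U, w i = z i ∧ (fun z' => g z' i) =ᶠ[nhds z]
        (fun z' => f (Function.update w i (z' i)) i) := by
    intro z hz i
    obtain ⟨w, hwU, hwi⟩ := hz i (Set.mem_univ i)
    refine ⟨w, hwU, hwi, ?_⟩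
    have hT : IsOpen {z' : ∀ j, Fin (l j) → ℂ | Function.update w i (z' i) ∈ U} := by
      have hc : Continuous fun z' : ∀ j, Fin (l j) → ℂ =>
          Function.update w i (z' i) :=
        continuous_const.update i (continuous_apply i)
      exact hU.preimage hc
    have hzT : z ∈ {z' : ∀ j, Fin (l j) → ℂ | Function.update w i (z' i) ∈ U} := by
      show Function.update w i (z i) ∈ U
      rw [← hwi, Function.update_eq_self]
      exact hwU
    filter_upwards [hT.mem_nhds hzT] with z' hz'
    exact gspec i z' _ hz' (Function.update_self i (z' i) w)
  -- the nice local function is differentiable with computable fderiv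
  have hnice : ∀ (w : ∀ j, Fin (l j) → ℂ), w ∈ U → ∀ (i : Fin n) (z : ∀ j, Fin (l j) → ℂ),
      Function.update w i (z i) ∈ U →
      HasFDerivAt (fun z' => f (Function.update w i (z' i)) i)
        ((fderiv ℂ (fun z => f z i) (Function.update w i (z i))).comp
          ((ContinuousLinearMap.pi (Pi.single i (ContinuousLinearMap.id ℂ (Fin (l i) → ℂ)))).comp
            (ContinuousLinearMap.proj i))) z := by
    intro w hwU i z hzU
    have hfa : DifferentiableAt ℂ f (Function.update w i (z i)) :=
      hf.1.differentiableAt (hU.mem_nhds hzU)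
    have hfi : HasFDerivAt (fun z => f z i)
        (fderiv ℂ (fun z => f z i) (Function.update w i (z i)))
        (Function.update w i (z i)) :=
      (differentiableAt_pi.mp hfa i).hasFDerivAt
    set P : ((j : Fin n) → Fin (l j) → ℂ) →L[ℂ] (Fin (l i) → ℂ) :=
      ContinuousLinearMap.proj i with hP
    have hupd := (hasFDerivAt_update (𝕜 := ℂ) w (z i)).comp z P.hasFDerivAt
    exact (hfi.comp z hupd : _)
  refine ⟨g, ⟨?_, ?_⟩, ?_⟩
  · -- DifferentiableOn
    intro z hz
    refine DifferentiableAt.differentiableWithinAt ?_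
    apply differentiableAt_pi.mpr
    intro i
    obtain ⟨w, hwU, hwi, heq⟩ := hloc z hz i
    have hzU : Function.update w i (z i) ∈ U := by
      rw [← hwi, Function.update_eq_self]; exact hwU
    exact ((hnice w hwU i z hzU).differentiableAt).congr_of_eventuallyEq heq
  · -- vanishing partials
    intro a ha i j hij v
    obtain ⟨w, hwU, hwi, heq⟩ := hloc a ha i
    have haU : Function.update w i (a i) ∈ U := by
      rw [← hwi, Function.update_eq_self]; exact hwU
    have hfd := heq.fderiv_eq (𝕜 := ℂ)
    rw [hfd, (hnice w hwU i a haU).fderiv]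
    have hzero : (Pi.single j v : ∀ k, Fin (l k) → ℂ) i = 0 := by
      simp [Pi.single_eq_of_ne hij]
    simp [ContinuousLinearMap.proj_apply, hzero]
    exact (fderiv ℂ (fun z => f z i) (Function.update w i (a i))).map_zero
  · -- EqOn
    intro u hu
    funext i
    exact (gspec i u u hu rfl).symm
end
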